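/- arXiv:2011.03786 — 5 statements merged into one kernel-verified Lean document; each statement's English description precedes it below -/
import Mathlib

section
/- There exists an irrational number α = [0; a₁, a₂, …] ∈ (0,1) with (aₙ) unbounded (for instance with a_{n²} = 4n² and aₙ = 1 for n not a perfect square) such that t^s_{(qₙ)}(𝕋) ≠ t^s_{(xₙ)}(𝕋), where (qₙ) are the denominators of the convergents of α and (xₙ) is the increasing enumeration of {r qₙ : n ∈ ℕ, 1 ≤ r ≤ a_{n+1}}. -/
open Filter Topology

noncomputable section

/-- The circle group `𝕋 = ℝ/ℤ`. -/
abbrev Circle1 : Type := AddCircle (1 : ℝ)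

/-- A set of naturals has natural density zero. -/
def DensityZero (A : Set ℕ) : Prop :=
  Tendsto (fun n : ℕ => ((A ∩ Set.Icc 1 n).ncard : ℝ) / n) atTop (𝓝 0)

/-- Statistical convergence to `0` of a sequence in the circle. -/
def StatTendstoZero (x : ℕ → Circle1) : Prop :=
  ∀ ε : ℝ, 0 < ε → DensityZero {n : ℕ | ε ≤ ‖x n‖}

/-- The characterized subgroup `t_(a_n)(𝕋)`. -/
def charSet (a : ℕ → ℤ) : Set Circle1 :=
  {x : Circle1 | Tendsto (fun n : ℕ => a n • x) atTop (𝓝 0)}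

/-- The statistically characterized subgroup `t^s_(a_n)(𝕋)`. -/
def statCharSet (a : ℕ → ℤ) : Set Circle1 :=
  {x : Circle1 | StatTendstoZero (fun n : ℕ => a n • x)}

namespace CF

/-- Gauss-map orbit of `α`: `G α 0 = α`, `G α (n+1) = {1 / G α n}`. -/
def G (α : ℝ) : ℕ → ℝ
  | 0 => α
  | n + 1 => Int.fract (G α n)⁻¹

/-- The partial quotients of the regular continued fraction `α = [0; a 1, a 2, …]`
(with the convention `a 0 = 0`). -/
def a (α : ℝ) : ℕ → ℕ
  | 0 => 0
  | n + 1 => ⌊(G α n)⁻¹⌋₊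

/-- Denominators of the convergents of the continued fraction of `α`. -/
def q (α : ℝ) : ℕ → ℕ
  | 0 => 1
  | 1 => a α 1
  | (n + 2) => a α (n + 2) * q α (n + 1) + q α n

/-- Numerators of the convergents of the continued fraction of `α`. -/
def p (α : ℝ) : ℕ → ℕ
  | 0 => 0
  | 1 => 1
  | (n + 2) => a α (n + 2) * p α (n + 1) + p α n

/-- `θ n = q n * α - p n`. -/
def θ (α : ℝ) (n : ℕ) : ℝ := (q α n : ℝ) * α - (p α n : ℝ)

end CF

open CF

namespace P34
def b : ℕ → ℕ := fun m => if m % 2 = 1 then 2 else 2 ^ m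

lemma two_le_b (m : ℕ) : 2 ≤ b (m+1) := by
  unfold b
  rcases Nat.mod_two_eq_zero_or_one (m+1) with h | h
  · rw [if_neg (by omega)]
    calc 2 = 2^1 := rfl
    _ ≤ 2 ^ (m+1) := Nat.pow_le_pow_right (by norm_num) (by omega)
  · rw [if_pos h]

lemma b_even (m : ℕ) : b (m+1) % 2 = 0 := by
  unfold b
  rcases Nat.mod_two_eq_zero_or_one (m+1) with h | h
  · rw [if_neg (by omega)]
    rw [pow_succ, Nat.mul_mod, Nat.mod_self, Nat.mul_zero, Nat.zero_mod]
  · rw [if_pos h]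

noncomputable def c : ℕ → ℕ → ℝ
  | _, 0 => 0
  | n, k+1 => ((b (n+1) : ℝ) + c (n+1) k)⁻¹
  termination_by _ k => k

lemma c_zero (n : ℕ) : c n 0 = 0 := by rw [c]
lemma c_succ (n k : ℕ) : c n (k+1) = ((b (n+1) : ℝ) + c (n+1) k)⁻¹ := by rw [c]

lemma c_bounds : ∀ k n, 0 ≤ c n k ∧ c n k ≤ 1/2 := by
  intro k
  induction k with
  | zero => intro n; simp [c_zero]
  | succ k ih =>
    intro n
    rw [c_succ]
    have h2 : (2:ℝ) ≤ (b (n+1) : ℝ) + c (n+1) k := by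
      have h1 := (ih (n+1)).1
      have h3 : (2:ℝ) ≤ (b (n+1):ℝ) := by exact_mod_cast two_le_b n
      linarith
    constructor
    · positivity
    · rw [inv_le_comm₀ (by linarith) (by norm_num)]
      linarith

lemma den_pos (n k : ℕ) : (0:ℝ) < (b (n+1) : ℝ) + c (n+1) k := by
  have := (c_bounds k (n+1)).1
  have : (2:ℕ) ≤ b (n+1) := two_le_b n
  have : (2:ℝ) ≤ (b (n+1):ℝ) := by exact_mod_cast this
  linarith [(c_bounds k (n+1)).1]

lemma dist_c : ∀ k n, dist (c n k) (c n (k+1)) ≤ 1 * (1/4) ^ k := by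
  intro k
  induction k with
  | zero =>
    intro n
    rw [Real.dist_eq, c_zero, c_succ]
    have h := den_pos n 0
    have h2 : (2:ℝ) ≤ (b (n+1):ℝ) + c (n+1) 0 := by
      have : (2:ℝ) ≤ (b (n+1):ℝ) := by exact_mod_cast two_le_b n
      linarith [(c_bounds 0 (n+1)).1]
    rw [zero_sub, abs_neg, abs_of_nonneg (le_of_lt (inv_pos.mpr h))]
    calc ((b (n+1):ℝ) + c (n+1) 0)⁻¹ ≤ 2⁻¹ := by
          rw [inv_le_inv₀ h (by norm_num)]; exact h2
    _ ≤ 1 * (1/4)^0 := by norm_num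
  | succ k ih =>
    intro n
    rw [c_succ, c_succ, Real.dist_eq]
    have hu := den_pos n k
    have hv := den_pos n (k+1)
    have h2u : (2:ℝ) ≤ (b (n+1):ℝ) + c (n+1) k := by
      have : (2:ℝ) ≤ (b (n+1):ℝ) := by exact_mod_cast two_le_b n
      linarith [(c_bounds k (n+1)).1]
    have h2v : (2:ℝ) ≤ (b (n+1):ℝ) + c (n+1) (k+1) := by
      have : (2:ℝ) ≤ (b (n+1):ℝ) := by exact_mod_cast two_le_b n
      linarith [(c_bounds (k+1) (n+1)).1]
    have key : ((b (n+1):ℝ) + c (n+1) k)⁻¹ - ((b (n+1):ℝ) + c (n+1) (k+1))⁻¹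
        = (c (n+1) (k+1) - c (n+1) k) / (((b (n+1):ℝ) + c (n+1) k) * ((b (n+1):ℝ) + c (n+1) (k+1))) := by
      field_simp
      ring
    rw [key, abs_div]
    have hd := ih (n+1)
    rw [Real.dist_eq] at hd
    have habs : |c (n+1) (k+1) - c (n+1) k| ≤ 1 * (1/4)^k := by
      rw [abs_sub_comm]
      exact hd
    have hden : (4:ℝ) ≤ |((b (n+1):ℝ) + c (n+1) k) * ((b (n+1):ℝ) + c (n+1) (k+1))| := by
      rw [abs_of_pos (by positivity)]
      nlinarith
    calc |c (n+1) (k+1) - c (n+1) k| / |((b (n+1):ℝ) + c (n+1) k) * ((b (n+1):ℝ) + c (n+1) (k+1))|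
        ≤ (1 * (1/4)^k) / 4 := by
          apply div_le_div₀ (by positivity) habs (by norm_num) hden
    _ = 1 * (1/4)^(k+1) := by ring

lemma cauchy_c (n : ℕ) : CauchySeq (c n) :=
  cauchySeq_of_le_geometric (1/4) 1 (by norm_num) (fun k => dist_c k n)

noncomputable def t (n : ℕ) : ℝ := (cauchySeq_tendsto_of_complete (cauchy_c n)).choose

lemma ht (n : ℕ) : Tendsto (c n) atTop (𝓝 (t n)) :=
  (cauchySeq_tendsto_of_complete (cauchy_c n)).choose_spec

lemma t_le_half (n : ℕ) : t n ≤ 1/2 :=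
  le_of_tendsto (ht n) (Eventually.of_forall fun k => (c_bounds k n).2)

lemma t_pos (n : ℕ) : 0 < t n := by
  have hlow : ∀ k : ℕ, ((b (n+1):ℝ) + 1)⁻¹ ≤ c n (k+1) := by
    intro k
    rw [c_succ]
    have h1 : (b (n+1):ℝ) + c (n+1) k ≤ (b (n+1):ℝ) + 1 := by
      linarith [(c_bounds k (n+1)).2]
    exact inv_anti₀ (den_pos n k) h1
  have : ((b (n+1):ℝ) + 1)⁻¹ ≤ t n := by
    apply ge_of_tendsto (ht n)
    filter_upwards [eventually_ge_atTop 1] with k hk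
    obtain ⟨k', rfl⟩ := Nat.exists_eq_add_of_le' hk
    exact hlow _
  have hb : (0:ℝ) < (b (n+1):ℝ) + 1 := by positivity
  calc (0:ℝ) < ((b (n+1):ℝ) + 1)⁻¹ := by positivity
  _ ≤ t n := this

lemma t_rec (n : ℕ) : t n = ((b (n+1) : ℝ) + t (n+1))⁻¹ := by
  have h1 : Tendsto (fun k => c n (k+1)) atTop (𝓝 (t n)) :=
    (ht n).comp (tendsto_add_atTop_nat 1)
  have hne : (b (n+1):ℝ) + t (n+1) ≠ 0 := by
    have := t_pos (n+1)
    have : (2:ℝ) ≤ (b (n+1):ℝ) := by exact_mod_cast two_le_b n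
    positivity
  have h2 : Tendsto (fun k => ((b (n+1):ℝ) + c (n+1) k)⁻¹) atTop (𝓝 (((b (n+1):ℝ) + t (n+1))⁻¹)) :=
    ((ht (n+1)).const_add _).inv₀ hne
  exact tendsto_nhds_unique h1 (by simpa only [c_succ] using h2)

lemma t_inv (n : ℕ) : (t n)⁻¹ = (b (n+1) : ℝ) + t (n+1) := by
  rw [t_rec n, inv_inv]


noncomputable def α₀ : ℝ := t 0

lemma t_lt_one (n : ℕ) : t n < 1 := lt_of_le_of_lt (t_le_half n) (by norm_num)

lemma G_eq : ∀ n, CF.G α₀ n = t n := by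
  intro n
  induction n with
  | zero => rfl
  | succ n ih =>
    show Int.fract (CF.G α₀ n)⁻¹ = t (n+1)
    rw [ih, t_inv n]
    have : ((b (n+1) : ℝ)) = ((b (n+1) : ℤ) : ℝ) := by push_cast; ring
    rw [this, Int.fract_intCast_add, Int.fract_eq_self.mpr ⟨le_of_lt (t_pos (n+1)), t_lt_one (n+1)⟩]

lemma a_eq (n : ℕ) : CF.a α₀ (n+1) = b (n+1) := by
  show ⌊(CF.G α₀ n)⁻¹⌋₊ = b (n+1)
  rw [G_eq n, t_inv n]
  have h2 : (2:ℝ) ≤ (b (n+1):ℝ) := by exact_mod_cast two_le_b n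
  rw [Nat.floor_eq_iff (by linarith [t_pos (n+1)])]
  constructor
  · linarith [t_pos (n+1)]
  · linarith [t_lt_one (n+1)]

lemma no_rat : ∀ Q : ℕ, ∀ n P : ℕ, 0 < P → t n = (P:ℝ)/(Q:ℝ) → False := by
  intro Q
  induction Q using Nat.strong_induction_on with
  | _ Q ih =>
    intro n P hP h
    have htp := t_pos n
    have htl := t_lt_one n
    have hQ : 0 < Q := by
      by_contra hq
      rw [Nat.eq_zero_of_not_pos hq] at h
      simp at h
      linarith [htp, h]
    have hPQ : P < Q := by
      by_contra hpq
      push_neg at hpq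
      have : (1:ℝ) ≤ (P:ℝ)/(Q:ℝ) := by
        rw [le_div_iff₀ (by exact_mod_cast hQ)]
        simp only [one_mul]
        exact_mod_cast hpq
      linarith [h ▸ htl]
    -- t (n+1) = (Q - b(n+1)*P)/P
    have hinv : t (n+1) = (Q:ℝ)/(P:ℝ) - (b (n+1):ℝ) := by
      have := t_inv n
      rw [h] at this
      have hP' : (0:ℝ) < (P:ℝ) := by exact_mod_cast hP
      have hQ' : (0:ℝ) < (Q:ℝ) := by exact_mod_cast hQ
      rw [inv_div] at this
      linarith
    have hlt : (0:ℝ) < (Q:ℝ)/(P:ℝ) - (b (n+1):ℝ) := hinv ▸ t_pos (n+1)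
    have hP' : (0:ℝ) < (P:ℝ) := by exact_mod_cast hP
    have hbp : b (n+1) * P < Q := by
      have : ((b (n+1) * P : ℕ) : ℝ) < (Q:ℝ) := by
        push_cast
        rw [sub_pos, lt_div_iff₀ hP'] at hlt
        linarith
      exact_mod_cast this
    have hform : t (n+1) = ((Q - b (n+1) * P : ℕ) : ℝ) / (P:ℝ) := by
      rw [hinv]
      rw [Nat.cast_sub (le_of_lt hbp)]
      push_cast
      field_simp
    have hP'pos : 0 < Q - b (n+1) * P := by omega
    exact ih P hPQ (n+1) (Q - b (n+1) * P) hP'pos hform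


lemma irrational_α₀ : Irrational α₀ := by
  rw [Irrational]
  intro ⟨r, hr⟩
  have h0 : 0 < t 0 := t_pos 0
  have hrpos : 0 < r := by
    have : (0:ℝ) < (r:ℝ) := by rw [hr]; exact h0
    exact_mod_cast this
  apply no_rat r.den 0 r.num.toNat
  · have : 0 < r.num := Rat.num_pos.mpr hrpos
    omega
  · rw [show t 0 = α₀ from rfl, ← hr, Rat.cast_def]
    congr 1
    exact_mod_cast (Int.toNat_of_nonneg (le_of_lt (Rat.num_pos.mpr hrpos))).symm

lemma a1 : CF.a α₀ 1 = 2 := by rw [a_eq 0]; rfl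

lemma q0 : CF.q α₀ 0 = 1 := rfl
lemma q1 : CF.q α₀ 1 = 2 := by show CF.a α₀ 1 = 2; exact a1
lemma q_rec (n : ℕ) : CF.q α₀ (n+2) = b (n+2) * CF.q α₀ (n+1) + CF.q α₀ n := by
  show CF.a α₀ (n+2) * CF.q α₀ (n+1) + CF.q α₀ n = _
  rw [a_eq (n+1)]

lemma q_pos : ∀ n, 0 < CF.q α₀ n := by
  have h : ∀ n, 0 < CF.q α₀ n ∧ 0 < CF.q α₀ (n+1) := by
    intro n
    induction n with
    | zero => rw [q0, q1]; omega
    | succ n ih =>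
      refine ⟨ih.2, ?_⟩
      rw [q_rec n]
      have := two_le_b (n+1)
      nlinarith [ih.1, ih.2]
  exact fun n => (h n).1

lemma q_strictMono : StrictMono (CF.q α₀) := by
  apply strictMono_nat_of_lt_succ
  intro n
  match n with
  | 0 => rw [q0, q1]; omega
  | (m+1) =>
    rw [q_rec m]
    have h1 := two_le_b (m+1)
    have h2 := q_pos (m+1)
    have h3 := q_pos m
    nlinarith

lemma q_parity : ∀ k, CF.q α₀ (2*k) % 2 = 1 ∧ CF.q α₀ (2*k+1) % 2 = 0 := by
  intro k
  induction k with
  | zero => rw [Nat.mul_zero, q0, show 2*0+1 = 1 from rfl, q1]; omega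
  | succ k ih =>
    have e1 : 2*(k+1) = (2*k) + 2 := by ring
    have e2 : 2*(k+1)+1 = (2*k+1) + 2 := by ring
    constructor
    · rw [e1, q_rec (2*k)]
      have hb : b (2*k+2) % 2 = 0 := b_even (2*k+1)
      have hmul : (b (2*k+2) * CF.q α₀ (2*k+1)) % 2 = 0 := by
        rw [Nat.mul_mod, hb, Nat.zero_mul, Nat.zero_mod]
      omega
    · rw [e2, q_rec (2*k+1)]
      have hb : b (2*k+1+2) % 2 = 0 := b_even (2*k+2)
      have hmul : (b (2*k+1+2) * CF.q α₀ (2*k+1+1)) % 2 = 0 := by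
        rw [Nat.mul_mod, hb, Nat.zero_mul, Nat.zero_mod]
      omega

lemma b_even_val (k : ℕ) (hk : 1 ≤ k) : b (2*k) = 2^(2*k) := by
  unfold b
  rw [if_neg (by omega)]

lemma a_unbounded (M : ℕ) : ∃ n, M < CF.a α₀ n := by
  refine ⟨2*(M+1), ?_⟩
  have h1 : 2*(M+1) = (2*M+1) + 1 := by ring
  rw [h1, a_eq (2*M+1), ← h1, b_even_val (M+1) (by omega)]
  calc M < 2*(M+1) := by omega
  _ < 2^(2*(M+1)) := Nat.lt_two_pow_self


def yy : AddCircle (1:ℝ) := ((1/2 : ℝ) : AddCircle (1:ℝ))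

lemma norm_yy : ‖yy‖ = 1/2 := by
  rw [yy, AddCircle.norm_eq]
  rw [show round ((1:ℝ)⁻¹ * (1/2)) = 1 by norm_num [round_eq]]
  norm_num

lemma smul_yy_even (m : ℕ) (hm : m % 2 = 0) : ((m:ℤ) • yy) = 0 := by
  obtain ⟨l, rfl⟩ : ∃ l, m = 2*l := ⟨m/2, by omega⟩
  rw [yy, ← AddCircle.coe_zsmul]
  have h : ((2*l:ℕ):ℤ) • ((1:ℝ)/2) = ((l:ℤ):ℝ) := by
    rw [zsmul_eq_mul]; push_cast; ring
  rw [h, AddCircle.coe_eq_zero_iff]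
  exact ⟨l, by simp⟩

lemma smul_yy_odd (m : ℕ) (hm : m % 2 = 1) : ((m:ℤ) • yy) = yy := by
  obtain ⟨l, rfl⟩ : ∃ l, m = 2*l+1 := ⟨m/2, by omega⟩
  rw [yy, ← AddCircle.coe_zsmul]
  have h : ((2*l+1:ℕ):ℤ) • ((1:ℝ)/2) = ((l:ℤ):ℝ) + 1/2 := by
    rw [zsmul_eq_mul]; push_cast; ring
  rw [h]
  have h2 : ((((l:ℤ):ℝ) + 1/2 : ℝ) : AddCircle (1:ℝ))
      = ((((l:ℤ):ℝ) : ℝ) : AddCircle (1:ℝ)) + (((1:ℝ)/2 : ℝ) : AddCircle (1:ℝ)) := by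
    norm_cast
  rw [h2]
  have h3 : ((((l:ℤ):ℝ) : ℝ) : AddCircle (1:ℝ)) = 0 := by
    rw [AddCircle.coe_eq_zero_iff]
    exact ⟨l, by simp⟩
  rw [h3, zero_add]


lemma ncard_Icc' (a bb : ℕ) : (Set.Icc a bb).ncard = bb + 1 - a := by
  rw [← Finset.coe_Icc, Set.ncard_coe_finset, Nat.card_Icc]

lemma yy_not_mem : ¬ StatTendstoZero (fun n => ((CF.q α₀ n : ℕ):ℤ) • yy) := by
  intro h
  have hd := h (1/2) (by norm_num)
  have hEven : ∀ n, n % 2 = 0 → (1/2:ℝ) ≤ ‖((CF.q α₀ n : ℕ):ℤ) • yy‖ := by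
    intro n hn
    obtain ⟨k, rfl⟩ : ∃ k, n = 2*k := ⟨n/2, by omega⟩
    rw [smul_yy_odd _ (q_parity k).1, norm_yy]
  have hev := hd.eventually (gt_mem_nhds (show (0:ℝ) < 1/4 by norm_num))
  obtain ⟨N, hN⟩ := eventually_atTop.mp hev
  set E := {n : ℕ | (1/2:ℝ) ≤ ‖((CF.q α₀ n : ℕ):ℤ) • yy‖} with hE
  set n := 2*(N+2) with hn
  have hsub : (fun j => 2*j) '' (Set.Icc 1 (N+2)) ⊆ E ∩ Set.Icc 1 n := by
    rintro _ ⟨j, hj, rfl⟩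
    simp only [Set.mem_Icc] at hj
    dsimp only
    refine ⟨hEven _ (by omega), ?_⟩
    simp only [Set.mem_Icc]
    omega
  have hfin : (E ∩ Set.Icc 1 n).Finite := (Set.finite_Icc 1 n).inter_of_right E
  have hcard : (N+2) ≤ (E ∩ Set.Icc 1 n).ncard := by
    have hinj : Function.Injective (fun j : ℕ => 2*j) := fun a bb hab => by
      simp only [] at hab; omega
    have := Set.ncard_le_ncard hsub hfin
    rwa [Set.ncard_image_of_injective _ hinj, ncard_Icc', show N+2+1-1 = N+2 from rfl] at this
  have hlt := hN n (by omega)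
  have hge : (1/2 : ℝ) ≤ ((E ∩ Set.Icc 1 n).ncard : ℝ) / n := by
    rw [le_div_iff₀ (by positivity)]
    have h1 : ((N:ℝ)+2) ≤ ((E ∩ Set.Icc 1 n).ncard : ℝ) := by exact_mod_cast hcard
    have h2 : (n:ℝ) = 2*((N:ℝ)+2) := by rw [hn]; push_cast; ring
    rw [h2]
    linarith
  linarith


lemma sq_le_pow (j : ℕ) : (j+1)*(j+1) ≤ 2^(2*j) := by
  induction j with
  | zero => norm_num
  | succ j ih =>
    have h1 : 2*(j+1) = 2*j + 2 := by ring
    rw [h1, pow_add]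
    have : (j+1+1)*(j+1+1) ≤ 4*((j+1)*(j+1)) := by nlinarith
    calc (j+1+1)*(j+1+1) ≤ 4*((j+1)*(j+1)) := this
    _ ≤ 4*2^(2*j) := by omega
    _ = 2^(2*j)*2^2 := by ring
    _ ≤ _ := le_refl _

section Main
variable {x : ℕ → ℕ} (hx : StrictMono x)
  (hrange : Set.range x = {m : ℕ | ∃ n r : ℕ, 1 ≤ r ∧ r ≤ CF.a α₀ (n + 1) ∧ m = r * CF.q α₀ n})

include hrange in
lemma odd_mem (m : ℕ) (hm : m ∈ Set.range x) (hodd : m % 2 = 1) :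
    ∃ j, m = CF.q α₀ (2*j) := by
  rw [hrange] at hm
  obtain ⟨n, r, h1, h2, rfl⟩ := hm
  rcases Nat.even_or_odd n with ⟨j, hj⟩ | ⟨j, hj⟩
  · -- n = 2j even
    refine ⟨j, ?_⟩
    subst hj
    have hq : CF.q α₀ (j+j) % 2 = 1 := by
      have := (q_parity j).1
      rwa [show 2*j = j+j by ring] at this
    have ha : CF.a α₀ (j+j+1) = 2 := by
      rw [a_eq (j+j), ]
      unfold b
      rw [if_pos (by omega)]
    rw [ha] at h2
    have hr1 : r = 1 := by
      rcases (by omega : r = 1 ∨ r = 2) with rfl | rfl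
      · rfl
      · exfalso
        rw [Nat.mul_mod] at hodd
        omega
    rw [hr1, one_mul, two_mul]
  · -- n = 2j+1 odd: q even, contradiction
    exfalso
    subst hj
    have hq : CF.q α₀ (2*j+1) % 2 = 0 := (q_parity j).2
    rw [Nat.mul_mod, hq] at hodd
    omega

include hx hrange in
lemma pos_bound (k j : ℕ) (hj : 1 ≤ j) (hk : x k = CF.q α₀ (2*j)) : 2^(2*j) ≤ k := by
  set T := (fun r => r * CF.q α₀ (2*j-1)) '' Set.Icc 1 (2^(2*j)) with hT
  have hmem : ∀ r ∈ Set.Icc 1 (2^(2*j)), r * CF.q α₀ (2*j-1) ∈ Set.range x := by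
    intro r hr
    simp only [Set.mem_Icc] at hr
    rw [hrange]
    refine ⟨2*j-1, r, hr.1, ?_, rfl⟩
    have he : 2*j-1+1 = 2*j := by omega
    rw [a_eq (2*j-1), he, b_even_val j hj]
    exact hr.2
  have hlt : ∀ r ∈ Set.Icc 1 (2^(2*j)), r * CF.q α₀ (2*j-1) < CF.q α₀ (2*j) := by
    intro r hr
    simp only [Set.mem_Icc] at hr
    have he : 2*j = (2*j-2)+2 := by omega
    have he1 : 2*j-2+1 = 2*j-1 := by omega
    have hrec := q_rec (2*j-2)
    rw [← he, he1] at hrec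
    have hb : b (2*j) = 2^(2*j) := b_even_val j hj
    rw [hrec, hb]
    have := q_pos (2*j-2)
    have hq1 := q_pos (2*j-1)
    calc r * CF.q α₀ (2*j-1) ≤ 2^(2*j) * CF.q α₀ (2*j-1) := Nat.mul_le_mul_right _ hr.2
    _ < 2^(2*j) * CF.q α₀ (2*j-1) + CF.q α₀ (2*j-2) := by omega
  have hsub : T ⊆ x '' Set.Iio k := by
    rintro _ ⟨r, hr, rfl⟩
    obtain ⟨k', hk'⟩ := hmem r hr
    refine ⟨k', ?_, hk'⟩
    have : x k' < x k := by rw [hk', hk]; exact hlt r hr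
    exact Set.mem_Iio.mpr (hx.lt_iff_lt.mp this)
  have hfin : (x '' Set.Iio k).Finite := (Set.finite_Iio k).image x
  have hqne : CF.q α₀ (2*j-1) ≠ 0 := Nat.pos_iff_ne_zero.mp (q_pos _)
  have hc1 : T.ncard = 2^(2*j) := by
    rw [hT, Set.ncard_image_of_injective _ (mul_left_injective₀ hqne), ncard_Icc']
    exact Nat.add_sub_cancel _ _
  have hc2 : (x '' Set.Iio k).ncard ≤ k := by
    rw [Set.ncard_image_of_injective _ hx.injective,
      show Set.Iio k = ↑(Finset.range k) from (Finset.coe_range k).symm,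
      Set.ncard_coe_finset, Finset.card_range]
  calc 2^(2*j) = T.ncard := hc1.symm
  _ ≤ (x '' Set.Iio k).ncard := Set.ncard_le_ncard hsub hfin
  _ ≤ k := hc2


lemma nat_sqrt_atTop : Tendsto (fun n : ℕ => Nat.sqrt n) atTop atTop := by
  apply tendsto_atTop_atTop.mpr
  intro k
  exact ⟨k*k, fun n hn => (Nat.le_sqrt.mpr hn)⟩

lemma tendsto_sqrt_div : Tendsto (fun n : ℕ => (Nat.sqrt n : ℝ) / n) atTop (𝓝 0) := by
  have h1 : Tendsto (fun n : ℕ => ((Nat.sqrt n : ℝ))⁻¹) atTop (𝓝 0) :=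
    (tendsto_natCast_atTop_atTop.comp nat_sqrt_atTop).inv_tendsto_atTop
  apply squeeze_zero (g := fun n : ℕ => ((Nat.sqrt n : ℝ))⁻¹) ?_ ?_ h1
  · intro n
    positivity
  · intro n
    rcases Nat.eq_zero_or_pos n with rfl | hn
    · simp
    have hs : 0 < Nat.sqrt n := Nat.sqrt_pos.mpr hn
    have hs' : (0:ℝ) < (Nat.sqrt n : ℝ) := by exact_mod_cast hs
    rw [div_le_iff₀ (by exact_mod_cast hn), inv_mul_eq_div, le_div_iff₀ hs']
    have : ((Nat.sqrt n : ℕ):ℝ) * ((Nat.sqrt n : ℕ):ℝ) ≤ (n:ℝ) := by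
      exact_mod_cast (by nlinarith [Nat.sqrt_le' n] : Nat.sqrt n * Nat.sqrt n ≤ n)
    linarith

include hx hrange in
lemma yy_mem : StatTendstoZero (fun k => ((x k : ℕ):ℤ) • yy) := by
  intro ε hε
  set Bad := {k : ℕ | ε ≤ ‖((x k : ℕ):ℤ) • yy‖} with hBad
  have hxodd : ∀ k ∈ Bad, x k % 2 = 1 := by
    intro k hk
    rcases Nat.mod_two_eq_zero_or_one (x k) with h | h
    · exfalso
      have h0 : ((x k : ℕ):ℤ) • yy = 0 := smul_yy_even _ h
      rw [hBad, Set.mem_setOf_eq, h0, norm_zero] at hk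
      linarith
    · exact h
  have hcount : ∀ n : ℕ, (Bad ∩ Set.Icc 1 n).ncard ≤ Nat.sqrt n := by
    intro n
    classical
    set f : ℕ → ℕ := fun k => if h : ∃ j, x k = CF.q α₀ (2*j) then h.choose + 1 else 0 with hf
    have key : ∀ k ∈ Bad ∩ Set.Icc 1 n, ∃ j, x k = CF.q α₀ (2*j) :=
      fun k hk => odd_mem hrange (x k) ⟨k, rfl⟩ (hxodd k hk.1)
    have hmaps : ∀ k ∈ Bad ∩ Set.Icc 1 n, f k ∈ Set.Icc 1 (Nat.sqrt n) := by
      intro k hk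
      have hex := key k hk
      rw [hf]
      dsimp only
      rw [dif_pos hex]
      obtain ⟨hk1, hkn⟩ := Set.mem_Icc.mp hk.2
      have hspec : x k = CF.q α₀ (2*hex.choose) := hex.choose_spec
      have hjk : 2^(2*hex.choose) ≤ k := by
        rcases Nat.eq_zero_or_pos hex.choose with hz | hjpos
        · rw [hz]
          simpa using hk1
        · exact pos_bound hx hrange k hex.choose hjpos hspec
      have hsq : (hex.choose+1)*(hex.choose+1) ≤ n :=
        le_trans (le_trans (sq_le_pow hex.choose) hjk) hkn
      exact Set.mem_Icc.mpr ⟨by omega, Nat.le_sqrt.mpr hsq⟩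
    have hinj : Set.InjOn f (Bad ∩ Set.Icc 1 n) := by
      intro k1 hk1 k2 hk2 hfk
      have h1 := key k1 hk1
      have h2 := key k2 hk2
      rw [hf] at hfk
      dsimp only at hfk
      rw [dif_pos h1, dif_pos h2] at hfk
      have hch : h1.choose = h2.choose := by omega
      apply hx.injective
      rw [h1.choose_spec, h2.choose_spec, hch]
    have hle := Set.ncard_le_ncard_of_injOn f hmaps hinj (Set.finite_Icc _ _)
    rwa [ncard_Icc', Nat.add_sub_cancel] at hle
  apply squeeze_zero (g := fun n : ℕ => (Nat.sqrt n : ℝ) / n) ?_ ?_ tendsto_sqrt_div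
  · intro n
    positivity
  · intro n
    have hcast : ((Bad ∩ Set.Icc 1 n).ncard : ℝ) ≤ (Nat.sqrt n : ℝ) := by
      exact_mod_cast hcount n
    rcases Nat.eq_zero_or_pos n with rfl | hn
    · simp
    have hn' : (0:ℝ) < (n:ℝ) := by exact_mod_cast hn
    rw [div_le_div_iff₀ hn' hn']
    nlinarith

end Main
end P34

/-- **Proposition 3.4.** There is an irrational `α` with unbounded partial quotients
for which `t^s_(qₙ)(𝕋) ≠ t^s_(xₙ)(𝕋)`. -/
theorem stmt_10 :
    ∃ α : ℝ, α ∈ Set.Ioo (0 : ℝ) 1 ∧ Irrational α ∧ (∀ M : ℕ, ∃ n : ℕ, M < a α n) ∧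
      ∀ x : ℕ → ℕ, StrictMono x →
        Set.range x =
          {m : ℕ | ∃ n r : ℕ, 1 ≤ r ∧ r ≤ a α (n + 1) ∧ m = r * q α n} →
        statCharSet (fun n => (q α n : ℤ)) ≠ statCharSet (fun n => (x n : ℤ)) := by
  refine ⟨P34.α₀, ⟨P34.t_pos 0, P34.t_lt_one 0⟩, P34.irrational_α₀, P34.a_unbounded, ?_⟩
  intro x hx hrange heq
  have h1 : P34.yy ∈ statCharSet (fun n => (x n : ℤ)) := P34.yy_mem hx hrange
  have h2 : P34.yy ∉ statCharSet (fun n => (q P34.α₀ n : ℤ)) := P34.yy_not_mem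
  rw [heq] at h2
  exact h2 h1
end
end

section
/- Let α = [0; a₁, a₂, …] ∈ (0,1) be irrational with convergents pₙ/qₙ and θₙ = qₙα − pₙ. Then every β ∈ (−α, 1−α) has a unique representation β = Σ_{k=0}^∞ d_k θ_k where the integer digits satisfy 0 ≤ d₀ < a₁, 0 ≤ d_k ≤ a_{k+1} for k ≥ 1, d_k = a_{k+1} implies d_{k−1} = 0 for k ≥ 1, and d_{2i} ≠ a_{2i+1} for infinitely many i. -/
open Filter Topology

noncomputable section

open CF

namespace OstAux
open CF

variable {α : ℝ}

def Nice (α : ℝ) : Prop := 0 < α ∧ α < 1 ∧ Irrational α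

lemma G_nice (h : Nice α) : ∀ n, 0 < G α n ∧ G α n < 1 ∧ Irrational (G α n) := by
  intro n; induction n with
  | zero => exact h
  | succ n ih =>
    obtain ⟨h0, h1, hi⟩ := ih
    have hfr : Irrational (Int.fract (G α n)⁻¹) := by
      rw [Int.fract]; exact Irrational.sub_intCast hi.inv _
    refine ⟨?_, Int.fract_lt_one _, hfr⟩
    rcases (Int.fract_nonneg (G α n)⁻¹).lt_or_eq with h | h
    · exact h
    · exact absurd h.symm (by intro h0'; exact hfr.ne_rat 0 (by simp [h0']))

lemma G_inv_eq (h : Nice α) (n : ℕ) :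
    (G α n)⁻¹ = (a α (n + 1) : ℝ) + G α (n + 1) := by
  obtain ⟨h0, h1, hi⟩ := G_nice h n
  have hy : (0:ℝ) ≤ (G α n)⁻¹ := le_of_lt (by positivity)
  have : ((a α (n+1) : ℕ) : ℝ) = ((⌊(G α n)⁻¹⌋ : ℤ) : ℝ) := by
    rw [show a α (n+1) = ⌊(G α n)⁻¹⌋₊ from rfl]
    exact_mod_cast congrArg (fun z : ℤ => (z : ℝ)) (Int.natCast_floor_eq_floor hy)
  rw [show G α (n+1) = Int.fract (G α n)⁻¹ from rfl, Int.fract, this]; ring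

lemma a_pos (h : Nice α) (n : ℕ) : 1 ≤ a α (n + 1) := by
  obtain ⟨h0, h1, _⟩ := G_nice h n
  have : (1:ℝ) ≤ (G α n)⁻¹ := by
    rw [le_inv_comm₀] <;> [skip; norm_num; exact h0]
    · simpa using h1.le
  exact Nat.le_floor (by exact_mod_cast this)

/-- `Tt α n = ∏_{i<n} G α i`, so `Tt 0 = 1`, `Tt 1 = α`, `|θ n| = Tt (n+1)`. -/
def Tt (α : ℝ) : ℕ → ℝ
  | 0 => 1
  | n + 1 => Tt α n * G α n

lemma Tt_pos (h : Nice α) (n : ℕ) : 0 < Tt α n := by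
  induction n with
  | zero => norm_num [Tt]
  | succ n ih => exact mul_pos ih (G_nice h n).1

lemma Tt_succ_lt (h : Nice α) (n : ℕ) : Tt α (n + 1) < Tt α n := by
  have := (G_nice h n).2.1
  calc Tt α (n+1) = Tt α n * G α n := rfl
    _ < Tt α n * 1 := by
        exact mul_lt_mul_of_pos_left this (Tt_pos h n)
    _ = Tt α n := mul_one _

lemma Tt_anti (h : Nice α) : StrictAnti (Tt α) :=
  strictAnti_nat_of_succ_lt (Tt_succ_lt h)

lemma Tt_rec (h : Nice α) (n : ℕ) :
    Tt α n = (a α (n + 1) : ℝ) * Tt α (n + 1) + Tt α (n + 2) := by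
  have h1 : Tt α (n+2) = Tt α (n+1) * G α (n+1) := rfl
  have h2 : Tt α (n+1) = Tt α n * G α n := rfl
  have hg := (G_nice h n).1
  have := G_inv_eq h n
  have : Tt α (n+1) * (G α n)⁻¹ = Tt α (n+1) * ((a α (n+1) : ℝ) + G α (n+1)) := by rw [this]
  rw [h2] at this
  field_simp at this
  rw [h1, h2]
  nlinarith [this]

lemma θ_eq (h : Nice α) (n : ℕ) : θ α n = (-1 : ℝ) ^ n * Tt α (n + 1) := by
  have key : ∀ n, θ α n = (-1:ℝ)^n * Tt α (n+1) ∧ θ α (n+1) = (-1:ℝ)^(n+1) * Tt α (n+2) := by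
    intro n
    induction n with
    | zero =>
      constructor
      · simp [θ, q, p, Tt, G]
      · have h0 : θ α 1 = (a α 1 : ℝ) * α - 1 := by simp [θ, q, p]
        have hG0 : G α 0 = α := rfl
        have := G_inv_eq h 0
        rw [hG0] at this
        have hα0 : α ≠ 0 := ne_of_gt h.1
        have : α * α⁻¹ = α * ((a α 1 : ℝ) + G α 1) := by rw [this]
        rw [mul_inv_cancel₀ hα0] at this
        rw [h0]
        have hT2 : Tt α 2 = α * G α 1 := by
          show Tt α 1 * G α 1 = _
          show Tt α 0 * G α 0 * G α 1 = _
          rw [hG0]; show 1 * α * G α 1 = _; ring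
        rw [hT2]
        have : (a α 1 : ℝ) * α = 1 - α * G α 1 := by nlinarith [this]
        rw [this]; ring
    | succ n ih =>
      obtain ⟨ih1, ih2⟩ := ih
      refine ⟨ih2, ?_⟩
      have hθrec : θ α (n + 2) = (a α (n+2) : ℝ) * θ α (n+1) + θ α n := by
        show (q α (n+2) : ℝ) * α - (p α (n+2) : ℝ) = _
        rw [show q α (n+2) = a α (n + 2) * q α (n + 1) + q α n from rfl,
            show p α (n+2) = a α (n + 2) * p α (n + 1) + p α n from rfl]
        push_cast [θ]; ring
      rw [hθrec, ih1, ih2, Tt_rec h (n+1)]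
      ring
  exact (key n).1

lemma Tt_step_le (h : Nice α) (n : ℕ) : Tt α (n + 1) ≤ Tt α n - Tt α (n + 2) := by
  have := Tt_rec h n
  have ha := a_pos h n
  have ha' : (1:ℝ) ≤ (a α (n+1) : ℝ) := by exact_mod_cast ha
  nlinarith [Tt_pos h (n+1)]

lemma Tt_sum_range_le (h : Nice α) (n : ℕ) :
    ∑ k ∈ Finset.range n, Tt α k ≤ 3 := by
  have tele : ∀ m, ∑ k ∈ Finset.range m, (Tt α k - Tt α (k+2)) =
      Tt α 0 + Tt α 1 - Tt α m - Tt α (m+1) := by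
    intro m
    induction m with
    | zero => simp
    | succ m ih => rw [Finset.sum_range_succ, ih]; ring
  rcases n with - | m
  · norm_num
  rw [Finset.sum_range_succ']
  have h1 : ∑ k ∈ Finset.range m, Tt α (k+1) ≤ ∑ k ∈ Finset.range m, (Tt α k - Tt α (k+2)) :=
    Finset.sum_le_sum fun k _ => Tt_step_le h k
  have h2 := tele m
  have hT0 : Tt α 0 = 1 := rfl
  have h3 := Tt_pos h m
  have h4 := Tt_pos h (m+1)
  have h5 : Tt α 1 ≤ 1 := by
    have := Tt_succ_lt h 0
    rw [hT0] at this; linarith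
  linarith [h1, h2.le]

lemma Tt_summable (h : Nice α) : Summable (Tt α) :=
  summable_of_sum_range_le (fun n => (Tt_pos h n).le) (Tt_sum_range_le h)

lemma Tt_tendsto (h : Nice α) : Tendsto (Tt α) atTop (𝓝 0) :=
  (Tt_summable h).tendsto_atTop_zero

/-- signed tail sum `W d n = (-1)^n ∑_{k≥n} d k θ k`. -/
def W (α : ℝ) (d : ℕ → ℕ) (n : ℕ) : ℝ :=
  ∑' k, (-1:ℝ)^k * (d (n+k) : ℝ) * Tt α (n+k+1)

section Wfacts
variable (h : Nice α) (d : ℕ → ℕ) (hd : ∀ k, d k ≤ a α (k+1))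
include h hd

lemma term_le (m : ℕ) : (d m : ℝ) * Tt α (m+1) ≤ Tt α m - Tt α (m+2) := by
  have h1 : (d m : ℝ) ≤ (a α (m+1) : ℝ) := by exact_mod_cast hd m
  have h2 := Tt_rec h m
  have h3 := (Tt_pos h (m+1))
  nlinarith

omit hd in
lemma Tt_shift_summable (n : ℕ) : Summable (fun k => Tt α (n + k)) := by
  have := (summable_nat_add_iff n).2 (Tt_summable h)
  exact this.congr (by intro k; simp [Nat.add_comm])

omit hd in
lemma norm_term (n k : ℕ) :
    ‖(-1:ℝ)^k * (d (n+k) : ℝ) * Tt α (n+k+1)‖ = (d (n+k) : ℝ) * Tt α (n+k+1) := by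
  rw [Real.norm_eq_abs, abs_mul, abs_mul, abs_pow, abs_neg, abs_one, one_pow, one_mul,
    Nat.abs_cast, abs_of_nonneg (Tt_pos h (n+k+1)).le]

lemma W_term_summable (n : ℕ) :
    Summable (fun k => (-1:ℝ)^k * (d (n+k) : ℝ) * Tt α (n+k+1)) := by
  apply Summable.of_norm
  refine Summable.of_nonneg_of_le (fun k => norm_nonneg _) (fun k => ?_) (Tt_shift_summable h n)
  rw [norm_term h d]
  have := term_le h d hd (n+k)
  have := Tt_pos h (n+k+2)
  linarith

omit hd in
lemma hasSum_tele (n : ℕ) :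
    HasSum (fun k => Tt α (n+k) - Tt α (n+k+2)) (Tt α n + Tt α (n+1)) := by
  have hs1 : Summable (fun k => Tt α (n+k)) := Tt_shift_summable h n
  have hs2 : Summable (fun k => Tt α (n+k+2)) :=
    (Tt_shift_summable h (n+2)).congr (by intro k; congr 1; omega)
  have hsum : Summable (fun k => Tt α (n+k) - Tt α (n+k+2)) := hs1.sub hs2
  rw [hsum.hasSum_iff_tendsto_nat]
  have tele : ∀ m, ∑ k ∈ Finset.range m, (Tt α (n+k) - Tt α (n+k+2)) =
      Tt α n + Tt α (n+1) - Tt α (n+m) - Tt α (n+m+1) := by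
    intro m
    induction m with
    | zero => simp
    | succ m ih =>
      rw [Finset.sum_range_succ, ih]
      have e1 : n + (m+1) = n + m + 1 := by omega
      have e2 : n + (m+1) + 1 = n + m + 2 := by omega
      rw [e1]
      simp only [show n+m+1+1 = n+m+2 from rfl]
      ring
  simp only [tele]
  have hlim : Tendsto (fun m => Tt α (n+m)) atTop (𝓝 0) := by
    have hmono : Tendsto (fun m : ℕ => n + m) atTop atTop := tendsto_atTop_atTop_of_monotone
      (fun i j hij => by omega) (fun b => ⟨b, by omega⟩)
    exact (Tt_tendsto h).comp hmono
  have hlim2 : Tendsto (fun m => Tt α (n+m+1)) atTop (𝓝 0) := by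
    have hmono : Tendsto (fun m : ℕ => n + m + 1) atTop atTop := tendsto_atTop_atTop_of_monotone
      (fun i j hij => by omega) (fun b => ⟨b, by omega⟩)
    exact (Tt_tendsto h).comp hmono
  have := ((tendsto_const_nhds (x := Tt α n + Tt α (n+1)) (f := atTop (α := ℕ))).sub hlim).sub hlim2
  simpa using this

lemma W_abs_le (n : ℕ) : |W α d n| ≤ Tt α n + Tt α (n+1) := by
  have hsum := W_term_summable h d hd n
  have h1 : |W α d n| ≤ ∑' k, ‖(-1:ℝ)^k * (d (n+k) : ℝ) * Tt α (n+k+1)‖ := by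
    rw [W, ← Real.norm_eq_abs]
    exact norm_tsum_le_tsum_norm hsum.norm
  have h2 : ∑' k, ‖(-1:ℝ)^k * (d (n+k) : ℝ) * Tt α (n+k+1)‖
      ≤ ∑' k, (Tt α (n+k) - Tt α (n+k+2)) := by
    refine hsum.norm.tsum_le_tsum (fun k => ?_) (hasSum_tele h n).summable
    rw [norm_term h d]
    exact term_le h d hd (n+k)
  have h3 := (hasSum_tele h n).tsum_eq
  linarith

lemma W_rec (n : ℕ) : W α d n = (d n : ℝ) * Tt α (n+1) - W α d (n+1) := by
  have hsum := W_term_summable h d hd n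
  have h0 : W α d n = (-1:ℝ)^0 * (d (n+0) : ℝ) * Tt α (n+0+1)
      + ∑' k, (-1:ℝ)^(k+1) * (d (n+(k+1)) : ℝ) * Tt α (n+(k+1)+1) := by
    rw [W, tsum_eq_zero_add' ((summable_nat_add_iff 1).2 hsum)]
  have h1 : (fun k => (-1:ℝ)^(k+1) * (d (n+(k+1)) : ℝ) * Tt α (n+(k+1)+1))
      = fun k => -((-1:ℝ)^k * (d ((n+1)+k) : ℝ) * Tt α ((n+1)+k+1)) := by
    funext k
    have e : n+(k+1) = (n+1)+k := by omega
    rw [e]; ring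
  rw [h0, h1, tsum_neg]
  simp only [pow_zero, one_mul, Nat.add_zero]
  rw [W, sub_eq_add_neg]

lemma W_bounds (n : ℕ) : -(Tt α (n+1)) ≤ W α d n ∧ W α d n ≤ Tt α n := by
  have key : ∀ m n, W α d n ≤ Tt α n + Tt α (n+m) ∧ -(Tt α (n+1)) - Tt α (n+m) ≤ W α d n := by
    intro m
    induction m with
    | zero =>
      intro n
      have := W_abs_le h d hd n
      have h1 := abs_le.1 this
      have h2 : Tt α (n+1) ≤ Tt α n := (Tt_succ_lt h n).le
      constructor
      · simpa using by linarith [h1.2]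
      · simpa using by linarith [h1.1]
    | succ m ih =>
      intro n
      have hrec := W_rec h d hd n
      have hih := ih (n+1)
      have hT := Tt_rec h n
      have hdc : (0:ℝ) ≤ (d n : ℝ) := Nat.cast_nonneg _
      have hda : (d n : ℝ) ≤ (a α (n+1) : ℝ) := by exact_mod_cast hd n
      have hTp := Tt_pos h (n+1)
      have e : n+1+m = n+(m+1) := by omega
      constructor
      · have := hih.2
        rw [e] at this
        nlinarith
      · have := hih.1
        rw [e] at this
        have h2 : Tt α (n+1+1) ≤ Tt α (n+1) := (Tt_succ_lt h (n+1)).le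
        nlinarith
  have hlim : Tendsto (fun m => Tt α (n+m)) atTop (𝓝 0) := by
    have : Tendsto (fun m : ℕ => n + m) atTop atTop := tendsto_atTop_atTop_of_monotone
      (fun i j hij => by omega) (fun b => ⟨b, by omega⟩)
    exact (Tt_tendsto h).comp this
  constructor
  · have h1 : Tendsto (fun m => -(Tt α (n+1)) - Tt α (n+m)) atTop (𝓝 (-(Tt α (n+1)) - 0)) :=
      (tendsto_const_nhds).sub hlim
    simpa using le_of_tendsto h1 (Eventually.of_forall (fun m => (key m n).2))
  · have h1 : Tendsto (fun m => Tt α n + Tt α (n+m)) atTop (𝓝 (Tt α n + 0)) :=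
      (tendsto_const_nhds).add hlim
    simpa using ge_of_tendsto h1 (Eventually.of_forall (fun m => (key m n).1))

lemma MaxForce (n : ℕ) (hW : W α d n = Tt α n) :
    d n = a α (n+1) ∧ W α d (n+1) = -(Tt α (n+2)) := by
  have hrec := W_rec h d hd n
  have hb := W_bounds h d hd (n+1)
  have hT := Tt_rec h n
  have hda : (d n : ℝ) ≤ (a α (n+1) : ℝ) := by exact_mod_cast hd n
  have hTp := Tt_pos h (n+1)
  have hTp2 := Tt_pos h (n+2)
  have hlt := Tt_succ_lt h (n+1)
  have hdeq : (d n : ℝ) = (a α (n+1) : ℝ) := by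
    by_contra hne
    have : (d n : ℝ) ≤ (a α (n+1) : ℝ) - 1 := by
      have : d n < a α (n+1) := lt_of_le_of_ne (hd n) (by exact_mod_cast hne)
      have : d n ≤ a α (n+1) - 1 := by omega
      have h2 : ((d n : ℕ) : ℝ) ≤ ((a α (n+1) - 1 : ℕ) : ℝ) := by exact_mod_cast this
      have h3 : ((a α (n+1) - 1 : ℕ) : ℝ) = (a α (n+1) : ℝ) - 1 := by
        have := a_pos h n
        push_cast [Nat.cast_sub this]; ring
      linarith [h2, h3.le]
    nlinarith [hb.1]
  constructor
  · exact_mod_cast hdeq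
  · rw [hdeq] at hrec; linarith

lemma MinForce (n : ℕ) (hW : W α d n = -(Tt α (n+1))) :
    d n = 0 ∧ W α d (n+1) = Tt α (n+1) := by
  have hrec := W_rec h d hd n
  have hb := W_bounds h d hd (n+1)
  have hTp := Tt_pos h (n+1)
  have hd0 : d n = 0 := by
    by_contra hne
    have h1 : (1:ℝ) ≤ (d n : ℝ) := by exact_mod_cast Nat.one_le_iff_ne_zero.2 hne
    nlinarith [hb.2]
  refine ⟨hd0, ?_⟩
  rw [hd0] at hrec; simp at hrec; linarith

lemma chainMax (n : ℕ) (hW : W α d n = Tt α n) :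
    ∀ j, d (n + 2*j) = a α (n + 2*j + 1) := by
  have key : ∀ j, W α d (n + 2*j) = Tt α (n + 2*j) := by
    intro j
    induction j with
    | zero => simpa using hW
    | succ j ih =>
      have h1 := MaxForce h d hd (n+2*j) ih
      have h2 := MinForce h d hd (n+2*j+1) h1.2
      have e : n + 2*(j+1) = n + 2*j + 1 + 1 := by omega
      rw [e]
      exact h2.2
  intro j
  exact (MaxForce h d hd (n+2*j) (key j)).1

end Wfacts

section Uniq
variable (h : Nice α)

/-- Validity of a digit sequence. -/
def Valid (α : ℝ) (d : ℕ → ℕ) : Prop :=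
  d 0 < a α 1 ∧
  (∀ k, 1 ≤ k → d k ≤ a α (k + 1)) ∧
  (∀ k, 1 ≤ k → d k = a α (k + 1) → d (k - 1) = 0) ∧
  (∀ N : ℕ, ∃ i : ℕ, N ≤ i ∧ d (2 * i) ≠ a α (2 * i + 1))

lemma Valid.le_all {d : ℕ → ℕ} (hv : Valid α d) : ∀ k, d k ≤ a α (k+1) := by
  intro k
  rcases k with - | k
  · exact hv.1.le
  · exact hv.2.1 (k+1) (by omega)

include h in
lemma W_zero {d : ℕ → ℕ} {β : ℝ} (hd : ∀ k, d k ≤ a α (k+1))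
    (hs : HasSum (fun k : ℕ => (d k : ℝ) * θ α k) β) : W α d 0 = β := by
  have h1 : W α d 0 = ∑' k, (d k : ℝ) * θ α k := by
    rw [W]
    apply tsum_congr
    intro k
    rw [θ_eq h k]
    simp only [Nat.zero_add]
    ring
  rw [h1, hs.tsum_eq]

include h in
lemma W_eq_of_prefix {d e : ℕ → ℕ} (hd : ∀ k, d k ≤ a α (k+1)) (he : ∀ k, e k ≤ a α (k+1))
    (h0 : W α d 0 = W α e 0) (n : ℕ) (hpre : ∀ k, k < n → d k = e k) :
    W α d n = W α e n := by
  induction n with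
  | zero => exact h0
  | succ n ih =>
    have hih := ih (fun k hk => hpre k (by omega))
    have h1 := W_rec h d hd n
    have h2 := W_rec h e he n
    have h3 : (d n : ℝ) = (e n : ℝ) := by exact_mod_cast hpre n (by omega)
    rw [h3] at h1
    linarith [h1, h2, hih]

include h in
lemma key_contra {d e : ℕ → ℕ} (hvd : Valid α d) (hve : Valid α e) (n : ℕ)
    (hW : W α d n = W α e n) (hlt : d n < e n) : False := by
  have hd := hvd.le_all
  have he := hve.le_all
  have hrd := W_rec h d hd n
  have hre := W_rec h e he n
  have hbd1 := W_bounds h d hd (n+1)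
  have hbe1 := W_bounds h e he (n+1)
  have hT1 := Tt_pos h (n+1)
  have hT2 := Tt_pos h (n+2)
  have hT3 := Tt_pos h (n+3)
  have hTlt := Tt_succ_lt h (n+1)
  -- e n = d n + 1
  have hcast : (d n : ℝ) + 1 ≤ (e n : ℝ) := by exact_mod_cast hlt
  have hdiff : W α e (n+1) - W α d (n+1) = ((e n : ℝ) - (d n : ℝ)) * Tt α (n+1) := by
    have : (d n : ℝ) * Tt α (n+1) - W α d (n+1) = (e n : ℝ) * Tt α (n+1) - W α e (n+1) := by
      rw [← hrd, ← hre, hW]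
    nlinarith [this]
  have hen : (e n : ℝ) = (d n : ℝ) + 1 := by
    have h2 : e n ≤ d n + 1 := by
      by_contra hh
      push_neg at hh
      have hcc : (d n : ℝ) + 2 ≤ (e n : ℝ) := by exact_mod_cast hh
      nlinarith [hbe1.2, hbd1.1, hdiff, hT1, hT2, hTlt]
    have h3 : e n = d n + 1 := by omega
    rw [h3]; push_cast; ring
  have hstar : W α e (n+1) - W α d (n+1) = Tt α (n+1) := by
    rw [hdiff, hen]; ring
  -- e (n+1) ≤ a (n+2) - 1
  have hen1 : e (n+1) ≠ a α (n+2) := by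
    intro hc
    have := hve.2.2.1 (n+1) (by omega) hc
    simp at this
    omega
  have hen1' : (e (n+1) : ℝ) ≤ (a α (n+2) : ℝ) - 1 := by
    have hatom : a α (n+1+1) = a α (n+2) := rfl
    have hle : e (n+1) + 1 ≤ a α (n+2) := by
      have := he (n+1); omega
    have hle' : ((e (n+1) + 1 : ℕ) : ℝ) ≤ ((a α (n+2) : ℕ) : ℝ) := by exact_mod_cast hle
    push_cast at hle'; linarith
  -- W d (n+1) = -T(n+2)
  have hre1 := W_rec h e he (n+1)
  have hrd1 := W_rec h d hd (n+1)
  have hbe2 := W_bounds h e he (n+2)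
  have hbd2 := W_bounds h d hd (n+2)
  have hTrec := Tt_rec h (n+1)
  have hmul : (e (n+1) : ℝ) * Tt α (n+2) ≤ ((a α (n+2) : ℝ) - 1) * Tt α (n+2) :=
    mul_le_mul_of_nonneg_right hen1' hT2.le
  have hWd1 : W α d (n+1) = -(Tt α (n+2)) := by
    have hup : W α d (n+1) ≤ -(Tt α (n+2)) := by
      linarith [hbe2.1, hstar, hre1, hmul, hTrec]
    linarith [hbd1.1]
  -- W e (n+2) = -T(n+3)
  have hWe2 : W α e (n+2) = -(Tt α (n+3)) := by
    have hWe1 : W α e (n+1) = Tt α (n+1) - Tt α (n+2) := by linarith [hstar]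
    have heq2 : W α e (n+2) = (e (n+1) : ℝ) * Tt α (n+2) - Tt α (n+1) + Tt α (n+2) := by
      linarith [hre1, hWd1, hstar]
    have hup : W α e (n+2) ≤ -(Tt α (n+3)) := by
      linarith [heq2, hmul, hTrec]
    linarith [hbe2.1]
  -- chains
  have hmind := MinForce h d hd (n+1) hWd1
  have hchaind := chainMax h d hd (n+2) hmind.2
  have hmine := MinForce h e he (n+2) hWe2
  have hchaine := chainMax h e he (n+3) hmine.2
  rcases Nat.even_or_odd n with ⟨m, hm⟩ | ⟨m, hm⟩
  · -- n = 2m, d (n+2+2j) = a(...)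
    obtain ⟨i, hi, hne⟩ := hvd.2.2.2 (m+1)
    apply hne
    have := hchaind (i - m - 1)
    have e1 : n + 2 + 2 * (i - m - 1) = 2 * i := by omega
    rw [e1] at this
    rw [this]
  · -- n = 2m+1, e (n+3+2j) = a(...)
    obtain ⟨i, hi, hne⟩ := hve.2.2.2 (m+2)
    apply hne
    have := hchaine (i - m - 2)
    have e1 : n + 3 + 2 * (i - m - 2) = 2 * i := by omega
    rw [e1] at this
    rw [this]

include h in
lemma uniq {d e : ℕ → ℕ} {β : ℝ} (hvd : Valid α d) (hve : Valid α e)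
    (hsd : HasSum (fun k : ℕ => (d k : ℝ) * θ α k) β)
    (hse : HasSum (fun k : ℕ => (e k : ℝ) * θ α k) β) : d = e := by
  have h0 : W α d 0 = W α e 0 := by
    rw [W_zero h hvd.le_all hsd, W_zero h hve.le_all hse]
  have main : ∀ n, d n = e n := by
    intro n
    induction n using Nat.strong_induction_on with
    | _ n ih =>
      have hW := W_eq_of_prefix h hvd.le_all hve.le_all h0 n ih
      rcases lt_trichotomy (d n) (e n) with hc | hc | hc
      · exact (key_contra h hvd hve n hW hc).elim
      · exact hc
      · exact (key_contra h hve hvd n hW.symm hc).elim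
  funext n; exact main n

end Uniq

section Exist
variable (h : Nice α)

/-- The greedy digit. -/
def Dfun (α : ℝ) (n : ℕ) (v : ℝ) : ℕ :=
  (max (if Even n then ⌊(v - Tt α (n+2))/Tt α (n+1)⌋ + 1
        else ⌈(v - Tt α (n+2))/Tt α (n+1)⌉) 0).toNat

/-- The remainder sequence. -/
def vsq (α β : ℝ) : ℕ → ℝ
  | 0 => β
  | n + 1 => (Dfun α n (vsq α β n) : ℝ) * Tt α (n+1) - vsq α β n

include h in
lemma stepE (n : ℕ) (hn : Even n) (v : ℝ)
    (hv1 : -(Tt α (n+1)) ≤ v) (hv2 : v < Tt α n) :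
    (-(Tt α (n+2)) < (Dfun α n v : ℝ) * Tt α (n+1) - v
      ∧ (Dfun α n v : ℝ) * Tt α (n+1) - v ≤ Tt α (n+1))
    ∧ Dfun α n v ≤ a α (n+1)
    ∧ (v < Tt α n - Tt α (n+1) → Dfun α n v < a α (n+1))
    ∧ (1 ≤ Dfun α n v → (Dfun α n v : ℝ) * Tt α (n+1) - v ≤ Tt α (n+1) - Tt α (n+2)) := by
  have hT1 := Tt_pos h (n+1)
  have hT2 := Tt_pos h (n+2)
  have hTrec := Tt_rec h n
  have ha := a_pos h n
  set x := (v - Tt α (n+2))/Tt α (n+1) with hx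
  have hxT : x * Tt α (n+1) = v - Tt α (n+2) := by
    rw [hx, div_mul_cancel₀ _ hT1.ne']
  have hD : Dfun α n v = (max (⌊x⌋ + 1) 0).toNat := by
    simp [Dfun, if_pos hn, hx]
  set J : ℤ := max (⌊x⌋ + 1) 0 with hJ
  have hJ0 : 0 ≤ J := le_max_right _ _
  have hDJ : (Dfun α n v : ℝ) = (J : ℝ) := by
    rw [hD]
    exact_mod_cast congrArg (fun z : ℤ => (z : ℝ)) (Int.toNat_of_nonneg hJ0)
  have hJgt : x < (J : ℝ) := by
    have h1 : x < (⌊x⌋ : ℝ) + 1 := Int.lt_floor_add_one x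
    have h2 : (⌊x⌋ + 1 : ℤ) ≤ J := le_max_left _ _
    have h2' : ((⌊x⌋ + 1 : ℤ) : ℝ) ≤ (J : ℝ) := by exact_mod_cast h2
    push_cast at h2'
    linarith
  have hlow : -(Tt α (n+2)) < (Dfun α n v : ℝ) * Tt α (n+1) - v := by
    rw [hDJ]
    nlinarith [hJgt, hxT]
  -- upper: case split
  have hupFact : (J = 0 ∧ ((Dfun α n v : ℝ) * Tt α (n+1) - v = -v)) ∨
      (1 ≤ J ∧ (Dfun α n v : ℝ) * Tt α (n+1) - v ≤ Tt α (n+1) - Tt α (n+2)) := by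
    rcases le_or_gt (⌊x⌋ + 1) 0 with hc | hc
    · left
      have hJe : J = 0 := by omega
      refine ⟨hJe, ?_⟩
      rw [hDJ, hJe]; push_cast; ring
    · right
      have hJeq : J = ⌊x⌋ + 1 := by omega
      constructor
      · omega
      · have hfl : ((⌊x⌋ : ℤ) : ℝ) ≤ x := Int.floor_le x
        have : ((J : ℤ) : ℝ) - 1 ≤ x := by rw [hJeq]; push_cast; linarith
        rw [hDJ]
        nlinarith [this, hxT]
  have hup : (Dfun α n v : ℝ) * Tt α (n+1) - v ≤ Tt α (n+1) := by
    rcases hupFact with ⟨_, he⟩ | ⟨_, he⟩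
    · rw [he]; linarith
    · linarith
  refine ⟨⟨hlow, hup⟩, ?_, ?_, ?_⟩
  · -- D ≤ a (n+1)
    have hxa : x < (a α (n+1) : ℝ) := by
      have : v - Tt α (n+2) < (a α (n+1) : ℝ) * Tt α (n+1) := by nlinarith
      calc x = (v - Tt α (n+2))/Tt α (n+1) := hx
        _ < _ := by rw [div_lt_iff₀ hT1]; linarith
    have hfl : ⌊x⌋ < (a α (n+1) : ℤ) := Int.floor_lt.2 (by exact_mod_cast hxa)
    have hJa : J ≤ (a α (n+1) : ℤ) := by
      have : (0:ℤ) ≤ (a α (n+1) : ℤ) := by positivity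
      omega
    rw [hD]
    exact Int.toNat_le.2 hJa
  · -- strict digit bound
    intro hvs
    have hxa : x < (a α (n+1) : ℝ) - 1 := by
      have : v - Tt α (n+2) < ((a α (n+1) : ℝ) - 1) * Tt α (n+1) := by nlinarith
      calc x = (v - Tt α (n+2))/Tt α (n+1) := hx
        _ < _ := by rw [div_lt_iff₀ hT1]; linarith
    have hfl : ⌊x⌋ < (a α (n+1) : ℤ) - 1 := by
      have : (((a α (n+1) : ℤ) - 1 : ℤ) : ℝ) = (a α (n+1) : ℝ) - 1 := by push_cast; ring
      exact Int.floor_lt.2 (by rw [this]; exact hxa)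
    have hJa : J ≤ (a α (n+1) : ℤ) - 1 := by
      have h1 : (1:ℤ) ≤ (a α (n+1) : ℤ) := by exact_mod_cast ha
      omega
    have : Dfun α n v ≤ a α (n+1) - 1 := by
      rw [hD]
      apply Int.toNat_le.2
      have : ((a α (n+1) - 1 : ℕ) : ℤ) = (a α (n+1) : ℤ) - 1 := by
        push_cast [Nat.cast_sub ha]; ring
      omega
    omega
  · -- slot
    intro hD1
    rcases hupFact with ⟨hJe, _⟩ | ⟨_, he⟩
    · exfalso
      have hz : Dfun α n v = 0 := by rw [hD, hJe]; rfl
      omega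
    · exact he

include h in
lemma stepO (n : ℕ) (hn : ¬ Even n) (v : ℝ)
    (hv1 : -(Tt α (n+1)) < v) (hv2 : v ≤ Tt α n) :
    (-(Tt α (n+2)) ≤ (Dfun α n v : ℝ) * Tt α (n+1) - v
      ∧ (Dfun α n v : ℝ) * Tt α (n+1) - v < Tt α (n+1))
    ∧ Dfun α n v ≤ a α (n+1)
    ∧ (v ≤ Tt α n - Tt α (n+1) → Dfun α n v < a α (n+1))
    ∧ (1 ≤ Dfun α n v → (Dfun α n v : ℝ) * Tt α (n+1) - v < Tt α (n+1) - Tt α (n+2)) := by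
  have hT1 := Tt_pos h (n+1)
  have hT2 := Tt_pos h (n+2)
  have hTrec := Tt_rec h n
  have ha := a_pos h n
  set x := (v - Tt α (n+2))/Tt α (n+1) with hx
  have hxT : x * Tt α (n+1) = v - Tt α (n+2) := by
    rw [hx, div_mul_cancel₀ _ hT1.ne']
  have hD : Dfun α n v = (max ⌈x⌉ 0).toNat := by
    simp [Dfun, if_neg hn, hx]
  set J : ℤ := max ⌈x⌉ 0 with hJ
  have hJ0 : 0 ≤ J := le_max_right _ _
  have hDJ : (Dfun α n v : ℝ) = (J : ℝ) := by
    rw [hD]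
    exact_mod_cast congrArg (fun z : ℤ => (z : ℝ)) (Int.toNat_of_nonneg hJ0)
  have hJge : x ≤ (J : ℝ) := by
    have h1 : x ≤ (⌈x⌉ : ℝ) := Int.le_ceil x
    have h2 : (⌈x⌉ : ℤ) ≤ J := le_max_left _ _
    have h2' : ((⌈x⌉ : ℤ) : ℝ) ≤ (J : ℝ) := by exact_mod_cast h2
    linarith
  have hlow : -(Tt α (n+2)) ≤ (Dfun α n v : ℝ) * Tt α (n+1) - v := by
    rw [hDJ]
    nlinarith [hJge, hxT]
  have hupFact : (J = 0 ∧ ((Dfun α n v : ℝ) * Tt α (n+1) - v = -v)) ∨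
      (1 ≤ J ∧ (Dfun α n v : ℝ) * Tt α (n+1) - v < Tt α (n+1) - Tt α (n+2)) := by
    rcases le_or_gt ⌈x⌉ 0 with hc | hc
    · left
      have hJe : J = 0 := by omega
      constructor
      · exact hJe
      · rw [hDJ, hJe]; push_cast; ring
    · right
      have hJeq : J = ⌈x⌉ := by omega
      constructor
      · omega
      · have hfl : ((⌈x⌉ : ℤ) : ℝ) < x + 1 := Int.ceil_lt_add_one x
        have : ((J : ℤ) : ℝ) - 1 < x := by rw [hJeq]; linarith
        rw [hDJ]
        nlinarith [this, hxT]
  have hup : (Dfun α n v : ℝ) * Tt α (n+1) - v < Tt α (n+1) := by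
    rcases hupFact with ⟨_, he⟩ | ⟨_, he⟩
    · rw [he]; linarith
    · linarith
  refine ⟨⟨hlow, hup⟩, ?_, ?_, ?_⟩
  · have hxa : x ≤ (a α (n+1) : ℝ) := by
      have : v - Tt α (n+2) ≤ (a α (n+1) : ℝ) * Tt α (n+1) := by nlinarith
      calc x = (v - Tt α (n+2))/Tt α (n+1) := hx
        _ ≤ _ := by rw [div_le_iff₀ hT1]; linarith
    have hfl : ⌈x⌉ ≤ (a α (n+1) : ℤ) := Int.ceil_le.2 (by exact_mod_cast hxa)
    have hJa : J ≤ (a α (n+1) : ℤ) := by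
      have : (0:ℤ) ≤ (a α (n+1) : ℤ) := by positivity
      omega
    rw [hD]
    exact Int.toNat_le.2 hJa
  · intro hvs
    have hxa : x ≤ (a α (n+1) : ℝ) - 1 := by
      have : v - Tt α (n+2) ≤ ((a α (n+1) : ℝ) - 1) * Tt α (n+1) := by nlinarith
      calc x = (v - Tt α (n+2))/Tt α (n+1) := hx
        _ ≤ _ := by rw [div_le_iff₀ hT1]; linarith
    have hfl : ⌈x⌉ ≤ (a α (n+1) : ℤ) - 1 := by
      apply Int.ceil_le.2
      have : (((a α (n+1) : ℤ) - 1 : ℤ) : ℝ) = (a α (n+1) : ℝ) - 1 := by push_cast; ring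
      rw [this]; exact hxa
    have hJa : J ≤ (a α (n+1) : ℤ) - 1 := by
      have h1 : (1:ℤ) ≤ (a α (n+1) : ℤ) := by exact_mod_cast ha
      omega
    have : Dfun α n v ≤ a α (n+1) - 1 := by
      rw [hD]
      apply Int.toNat_le.2
      have : ((a α (n+1) - 1 : ℕ) : ℤ) = (a α (n+1) : ℤ) - 1 := by
        push_cast [Nat.cast_sub ha]; ring
      omega
    omega
  · intro hD1
    rcases hupFact with ⟨hJe, _⟩ | ⟨_, he⟩
    · exfalso
      have hz : Dfun α n v = 0 := by rw [hD, hJe]; rfl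
      omega
    · exact he

variable (β : ℝ) (hβ1 : -(Tt α 1) < β) (hβ2 : β < Tt α 0 - Tt α 1)

/-- The digits of the greedy algorithm. -/
def dig (α β : ℝ) (n : ℕ) : ℕ := Dfun α n (vsq α β n)

include h hβ1 hβ2 in
lemma invariant : ∀ n : ℕ,
    (Even n → (-(Tt α (n+1)) ≤ vsq α β n ∧ vsq α β n < Tt α n) ∧
      (∀ m : ℕ, n = m + 1 → 1 ≤ dig α β m → vsq α β n < Tt α n - Tt α (n+1))) ∧
    (¬ Even n → (-(Tt α (n+1)) < vsq α β n ∧ vsq α β n ≤ Tt α n) ∧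
      (∀ m : ℕ, n = m + 1 → 1 ≤ dig α β m → vsq α β n ≤ Tt α n - Tt α (n+1))) := by
  intro n
  induction n with
  | zero =>
    constructor
    · intro _
      have hv0 : vsq α β 0 = β := rfl
      have e1 : Tt α (0+1) = Tt α 1 := rfl
      refine ⟨⟨?_, ?_⟩, ?_⟩
      · rw [hv0, e1]; linarith
      · have := Tt_pos h 1
        rw [hv0]
        linarith
      · intro m hm; omega
    · intro hc; exact absurd (Even.zero) hc
  | succ n ih =>
    have hv1 : vsq α β (n+1) = (dig α β n : ℝ) * Tt α (n+1) - vsq α β n := rfl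
    rcases Nat.even_or_odd n with hn | hn
    · -- n even, n+1 odd
      obtain ⟨hbd, _⟩ := (ih.1) hn
      have hs := stepE h n hn (vsq α β n) hbd.1 hbd.2
      have hodd : ¬ Even (n+1) := by
        simp only [Nat.even_add_one, not_not]; exact hn
      constructor
      · intro hc; exact absurd hc hodd
      · intro _
        refine ⟨⟨?_, ?_⟩, ?_⟩
        · rw [hv1]; exact hs.1.1
        · rw [hv1]; exact hs.1.2
        · intro m hm hdm
          have hmn : m = n := by omega
          rw [hv1]
          exact hs.2.2.2 (by rw [← hmn]; exact hdm)
    · -- n odd, n+1 even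
      have hnodd : ¬ Even n := by simp [Nat.not_even_iff_odd.2 hn]
      obtain ⟨hbd, _⟩ := (ih.2) hnodd
      have hs := stepO h n hnodd (vsq α β n) hbd.1 hbd.2
      have heven : Even (n+1) := by
        simp only [Nat.even_add_one]; exact hnodd
      constructor
      · intro _
        refine ⟨⟨?_, ?_⟩, ?_⟩
        · rw [hv1]; exact hs.1.1
        · rw [hv1]
          calc (dig α β n : ℝ) * Tt α (n+1) - vsq α β n < Tt α (n+1) := hs.1.2
            _ = Tt α (n+1) := rfl
        · intro m hm hdm
          have hmn : m = n := by omega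
          rw [hv1]
          exact hs.2.2.2 (by rw [← hmn]; exact hdm)
      · intro hc; exact absurd heven hc

include h hβ1 hβ2 in
lemma dig_le (n : ℕ) : dig α β n ≤ a α (n+1) := by
  have hI := invariant h β hβ1 hβ2 n
  rcases Nat.even_or_odd n with hn | hn
  · exact (stepE h n hn (vsq α β n) ((hI.1 hn).1.1) ((hI.1 hn).1.2)).2.1
  · have hnodd : ¬ Even n := Nat.not_even_iff_odd.2 hn
    exact (stepO h n hnodd (vsq α β n) ((hI.2 hnodd).1.1) ((hI.2 hnodd).1.2)).2.1

include h hβ1 hβ2 in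
lemma dig_zero_lt : dig α β 0 < a α 1 := by
  have hs := stepE h 0 Even.zero (vsq α β 0) (by
    have hI := invariant h β hβ1 hβ2 0
    exact (hI.1 Even.zero).1.1) (by
    have hI := invariant h β hβ1 hβ2 0
    exact (hI.1 Even.zero).1.2)
  apply hs.2.2.1
  show vsq α β 0 < Tt α 0 - Tt α 1
  exact hβ2

include h hβ1 hβ2 in
lemma dig_carry (k : ℕ) (hk : 1 ≤ k) (hmax : dig α β k = a α (k+1)) :
    dig α β (k-1) = 0 := by
  by_contra hne
  have hd1 : 1 ≤ dig α β (k-1) := Nat.one_le_iff_ne_zero.2 hne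
  have hI := invariant h β hβ1 hβ2 k
  have hk1 : k = (k-1) + 1 := by omega
  have hdig : dig α β k = Dfun α k (vsq α β k) := rfl
  rcases Nat.even_or_odd k with hn | hn
  · have hslot := (hI.1 hn).2 (k-1) hk1 hd1
    have hs := stepE h k hn (vsq α β k) ((hI.1 hn).1.1) ((hI.1 hn).1.2)
    have := hs.2.2.1 hslot
    omega
  · have hnodd : ¬ Even k := Nat.not_even_iff_odd.2 hn
    have hslot := (hI.2 hnodd).2 (k-1) hk1 hd1
    have hs := stepO h k hnodd (vsq α β k) ((hI.2 hnodd).1.1) ((hI.2 hnodd).1.2)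
    have := hs.2.2.1 hslot
    omega

include h hβ1 hβ2 in
lemma vsq_abs_le (n : ℕ) : |vsq α β n| ≤ Tt α n := by
  have hI := invariant h β hβ1 hβ2 n
  have h1 := Tt_succ_lt h n
  rcases Nat.even_or_odd n with hn | hn
  · have := (hI.1 hn).1
    rw [abs_le]; constructor <;> linarith [this.1, this.2]
  · have hnodd : ¬ Even n := Nat.not_even_iff_odd.2 hn
    have := (hI.2 hnodd).1
    rw [abs_le]; constructor <;> linarith [this.1, this.2]

include h in
lemma partial_sum (n : ℕ) :
    ∑ k ∈ Finset.range n, (dig α β k : ℝ) * θ α k = β - (-1:ℝ)^n * vsq α β n := by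
  induction n with
  | zero => simp [vsq]
  | succ n ih =>
    rw [Finset.sum_range_succ, ih, θ_eq h n]
    have hv1 : vsq α β (n+1) = (dig α β n : ℝ) * Tt α (n+1) - vsq α β n := rfl
    rw [hv1]
    ring

include h hβ1 hβ2 in
lemma dig_hasSum : HasSum (fun k : ℕ => (dig α β k : ℝ) * θ α k) β := by
  have hsum : Summable (fun k : ℕ => (dig α β k : ℝ) * θ α k) := by
    have h1 := W_term_summable h (dig α β) (dig_le h β hβ1 hβ2) 0
    apply (h1.congr _)
    intro k
    rw [θ_eq h k]
    simp only [Nat.zero_add]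
    ring
  have hps := hsum.hasSum.tendsto_sum_nat
  have hps2 : Tendsto (fun n => ∑ k ∈ Finset.range n, (dig α β k : ℝ) * θ α k) atTop (𝓝 β) := by
    have heq : (fun n => ∑ k ∈ Finset.range n, (dig α β k : ℝ) * θ α k)
        = fun n => β - (-1:ℝ)^n * vsq α β n := by
      funext n; exact partial_sum h β n
    rw [heq]
    have hz : Tendsto (fun n => (-1:ℝ)^n * vsq α β n) atTop (𝓝 0) := by
      apply squeeze_zero_norm (fun n => ?_) (Tt_tendsto h)
      have := vsq_abs_le h β hβ1 hβ2 n
      rw [norm_mul]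
      simp only [norm_pow, norm_neg, norm_one, one_pow, one_mul, Real.norm_eq_abs]
      exact this
    simpa using (tendsto_const_nhds (x := β)).sub hz
  exact (hsum.hasSum_iff_tendsto_nat).2 hps2

include h hβ1 hβ2 in
lemma dig_infoften (N : ℕ) : ∃ i : ℕ, N ≤ i ∧ dig α β (2*i) ≠ a α (2*i+1) := by
  by_contra hc
  push_neg at hc
  set N' := N + 1 with hN'
  -- for i ≥ N', dig (2i) = a (2i+1), dig(2i-1) = 0
  have hmax : ∀ i, N' ≤ i → dig α β (2*i) = a α (2*i+1) := by
    intro i hi; exact hc i (by omega)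
  have hzero : ∀ i, N' ≤ i → dig α β (2*i - 1) = 0 := by
    intro i hi
    exact dig_carry h β hβ1 hβ2 (2*i) (by omega) (hmax i hi)
  have hlower : ∀ i, N' ≤ i → Tt α (2*i) - Tt α (2*i+1) ≤ vsq α β (2*i) := by
    intro i hi
    by_contra hlt
    push_neg at hlt
    have hn : Even (2*i) := ⟨i, by omega⟩
    have hI := invariant h β hβ1 hβ2 (2*i)
    have hs := stepE h (2*i) hn (vsq α β (2*i)) ((hI.1 hn).1.1) ((hI.1 hn).1.2)
    have h5 := hs.2.2.1 hlt
    have h6 := hmax i hi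
    have hdig : dig α β (2*i) = Dfun α (2*i) (vsq α β (2*i)) := rfl
    omega
  have hupper : ∀ i, vsq α β (2*i) < Tt α (2*i) := by
    intro i
    have hn : Even (2*i) := ⟨i, by omega⟩
    have hI := invariant h β hβ1 hβ2 (2*i)
    exact (hI.1 hn).1.2
  -- c_i constant
  have hstep : ∀ i, N' ≤ i →
      Tt α (2*(i+1)) - vsq α β (2*(i+1)) = Tt α (2*i) - vsq α β (2*i) := by
    intro i hi
    have hd0 : dig α β (2*i+1) = 0 := by
      have := hzero (i+1) (by omega)
      have e : 2*(i+1) - 1 = 2*i+1 := by omega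
      rw [e] at this
      exact this
    have hv2 : vsq α β (2*i+2) = (dig α β (2*i+1) : ℝ) * Tt α (2*i+2) - vsq α β (2*i+1) := rfl
    have hv1 : vsq α β (2*i+1) = (dig α β (2*i) : ℝ) * Tt α (2*i+1) - vsq α β (2*i) := rfl
    have hrec := Tt_rec h (2*i)
    have hda : (dig α β (2*i) : ℝ) = (a α (2*i+1) : ℝ) := by exact_mod_cast hmax i hi
    have e : 2*(i+1) = 2*i+2 := by omega
    rw [e]
    rw [hv2, hd0, hv1, hda]
    push_cast
    linarith [hrec]
  have hconst : ∀ j, Tt α (2*(N'+j)) - vsq α β (2*(N'+j)) = Tt α (2*N') - vsq α β (2*N') := by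
    intro j
    induction j with
    | zero => rfl
    | succ j ih =>
      have := hstep (N'+j) (by omega)
      have e : N' + (j+1) = (N'+j) + 1 := by omega
      rw [e, this, ih]
  set c := Tt α (2*N') - vsq α β (2*N') with hcdef
  have hcpos : 0 < c := by
    have := hupper N'
    simp only [hcdef]
    linarith
  -- c ≤ T(2i+1) for all i ≥ N'
  have hcle : ∀ i, N' ≤ i → c ≤ Tt α (2*i+1) := by
    intro i hi
    have h1 := hlower i hi
    have h2 := hconst (i - N')
    have e : N' + (i - N') = i := by omega
    rw [e] at h2
    simp only [hcdef] at h2 ⊢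
    linarith [h2]
  -- contradiction with T → 0
  have := Tt_tendsto h
  rw [Metric.tendsto_atTop] at this
  obtain ⟨M, hM⟩ := this c hcpos
  set i := max N' M with hi
  have h1 := hcle i (le_max_left _ _)
  have h2 := hM (2*i+1) (by omega)
  rw [Real.dist_eq] at h2
  have h3 : Tt α (2*i+1) < c := by
    have := Tt_pos h (2*i+1)
    rw [abs_of_nonneg (by linarith)] at h2
    linarith
  linarith

end Exist

end OstAux

/-- **Proposition 1.6 (Ostrowski representation).** -/
theorem stmt_16 (α : ℝ) (hα : α ∈ Set.Ioo (0 : ℝ) 1) (hirr : Irrational α)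
    (β : ℝ) (hβ : β ∈ Set.Ioo (-α) (1 - α)) :
    ∃! d : ℕ → ℕ,
      d 0 < a α 1 ∧
      (∀ k, 1 ≤ k → d k ≤ a α (k + 1)) ∧
      (∀ k, 1 ≤ k → d k = a α (k + 1) → d (k - 1) = 0) ∧
      (∀ N : ℕ, ∃ i : ℕ, N ≤ i ∧ d (2 * i) ≠ a α (2 * i + 1)) ∧
      HasSum (fun k : ℕ => (d k : ℝ) * θ α k) β := by
  obtain ⟨hα0, hα1⟩ := hα
  obtain ⟨hβ1, hβ2⟩ := hβ
  have h : OstAux.Nice α := ⟨hα0, hα1, hirr⟩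
  have hT1 : OstAux.Tt α 1 = α := by
    show OstAux.Tt α 0 * G α 0 = α
    show (1:ℝ) * α = α
    ring
  have hT0 : OstAux.Tt α 0 = 1 := rfl
  have hb1 : -(OstAux.Tt α 1) < β := by rw [hT1]; linarith
  have hb2 : β < OstAux.Tt α 0 - OstAux.Tt α 1 := by rw [hT0, hT1]; linarith
  refine ⟨OstAux.dig α β, ⟨?_, ?_, ?_, ?_, ?_⟩, ?_⟩
  · exact OstAux.dig_zero_lt h β hb1 hb2
  · intro k _; exact OstAux.dig_le h β hb1 hb2 k
  · intro k hk hm; exact OstAux.dig_carry h β hb1 hb2 k hk hm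
  · intro N; exact OstAux.dig_infoften h β hb1 hb2 N
  · exact OstAux.dig_hasSum h β hb1 hb2
  · intro e he
    obtain ⟨he1, he2, he3, he4, he5⟩ := he
    have hve : OstAux.Valid α e := ⟨he1, he2, he3, he4⟩
    have hvd : OstAux.Valid α (OstAux.dig α β) :=
      ⟨OstAux.dig_zero_lt h β hb1 hb2, fun k _ => OstAux.dig_le h β hb1 hb2 k,
        fun k hk hm => OstAux.dig_carry h β hb1 hb2 k hk hm,
        fun N => OstAux.dig_infoften h β hb1 hb2 N⟩
    exact OstAux.uniq h hve hvd he5 (OstAux.dig_hasSum h β hb1 hb2)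
end
end

section
/- For any sequence of integers (aₙ), the statistically characterized subgroup t^s_{(aₙ)}(𝕋) is an F_{σδ} (hence Borel) subgroup of 𝕋 containing the characterized subgroup t_{(aₙ)}(𝕋). -/
open Filter Topology

noncomputable section

open CF

section Aux

/-- count of `m ∈ [1,n]` with `ε < ‖c m • x‖`. -/
def cnt (c : ℕ → ℤ) (x : Circle1) (i n : ℕ) : ℕ :=
  ((Finset.Icc 1 n).filter (fun m => 1 / ((i : ℝ) + 1) < ‖c m • x‖)).card

lemma ncard_eq_cnt (c : ℕ → ℤ) (x : Circle1) (i n : ℕ) :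
    ({m : ℕ | 1 / ((i : ℝ) + 1) < ‖c m • x‖} ∩ Set.Icc 1 n).ncard = cnt c x i n := by
  rw [cnt, ← Set.ncard_coe_finset]
  congr 1
  ext m
  simp [Finset.mem_filter, Finset.mem_Icc, Set.mem_Icc, and_comm]

lemma densityZero_mono {A B : Set ℕ} (h : A ⊆ B) (hB : DensityZero B) : DensityZero A := by
  refine squeeze_zero (fun n => by positivity) (fun n => ?_) hB
  rcases Nat.eq_zero_or_pos n with rfl | hn
  · simp
  · have hle : (A ∩ Set.Icc 1 n).ncard ≤ (B ∩ Set.Icc 1 n).ncard :=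
      Set.ncard_le_ncard (Set.inter_subset_inter_left _ h)
        (Set.Finite.inter_of_right (Set.finite_Icc 1 n) B)
    have hn' : (0 : ℝ) < n := by exact_mod_cast hn
    exact div_le_div_of_nonneg_right (by exact_mod_cast hle) hn'.le |>.trans_eq rfl

lemma densityZero_union {A B : Set ℕ} (hA : DensityZero A) (hB : DensityZero B) :
    DensityZero (A ∪ B) := by
  have htend : Tendsto (fun n : ℕ => ((A ∩ Set.Icc 1 n).ncard : ℝ) / n
      + ((B ∩ Set.Icc 1 n).ncard : ℝ) / n) atTop (𝓝 0) := by
    simpa using hA.add hB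
  refine squeeze_zero (fun n => by positivity) (fun n => ?_) htend
  rcases Nat.eq_zero_or_pos n with rfl | hn
  · simp
  · have hn' : (0 : ℝ) < n := by exact_mod_cast hn
    rw [← add_div, div_le_div_iff_of_pos_right hn']
    have : ((A ∪ B) ∩ Set.Icc 1 n) = (A ∩ Set.Icc 1 n) ∪ (B ∩ Set.Icc 1 n) :=
      Set.union_inter_distrib_right A B _
    rw [this]
    exact_mod_cast Set.ncard_union_le _ _

lemma densityZero_of_finite {A : Set ℕ} (h : A.Finite) : DensityZero A := by
  refine squeeze_zero (fun n => by positivity) (fun n => ?_)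
    (tendsto_const_div_atTop_nhds_zero_nat (A.ncard : ℝ))
  rcases Nat.eq_zero_or_pos n with rfl | hn
  · simp
  · have hn' : (0 : ℝ) < n := by exact_mod_cast hn
    have hle : (A ∩ Set.Icc 1 n).ncard ≤ A.ncard :=
      Set.ncard_le_ncard Set.inter_subset_left h
    exact div_le_div_of_nonneg_right (by exact_mod_cast hle) hn'.le |>.trans_eq rfl

lemma densityZero_iff {A : Set ℕ} :
    DensityZero A ↔ ∀ k : ℕ, ∃ N : ℕ, ∀ n ≥ N, (k + 1) * (A ∩ Set.Icc 1 n).ncard ≤ n := by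
  constructor
  · intro h k
    have hk : (0 : ℝ) < 1 / (k + 1) := by positivity
    obtain ⟨N, hN⟩ := (Metric.tendsto_atTop.mp h) (1 / (k + 1)) hk
    refine ⟨max N 1, fun n hn => ?_⟩
    have hn1 : 1 ≤ n := le_trans (le_max_right N 1) hn
    have hn' : (0 : ℝ) < n := by exact_mod_cast hn1
    have := hN n (le_trans (le_max_left N 1) hn)
    rw [Real.dist_eq, sub_zero, abs_of_nonneg (by positivity)] at this
    have hlt : ((k : ℝ) + 1) * (A ∩ Set.Icc 1 n).ncard < n := by
      rw [div_lt_div_iff₀ hn' (by positivity : (0:ℝ) < (k:ℝ)+1)] at this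
      nlinarith [this]
    have h2 : (((k + 1) * (A ∩ Set.Icc 1 n).ncard : ℕ) : ℝ) < n := by push_cast; linarith
    exact_mod_cast h2.le
  · intro h
    rw [DensityZero, Metric.tendsto_atTop]
    intro ε hε
    obtain ⟨k, hk⟩ := exists_nat_one_div_lt hε
    obtain ⟨N, hN⟩ := h k
    refine ⟨max N 1, fun n hn => ?_⟩
    have hn1 : 1 ≤ n := le_trans (le_max_right N 1) hn
    have hn' : (0 : ℝ) < n := by exact_mod_cast hn1
    have hc := hN n (le_trans (le_max_left N 1) hn)
    have hcr : ((k : ℝ) + 1) * (A ∩ Set.Icc 1 n).ncard ≤ n := by exact_mod_cast hc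
    rw [Real.dist_eq, sub_zero, abs_of_nonneg (by positivity)]
    have h1 : ((A ∩ Set.Icc 1 n).ncard : ℝ) / n ≤ 1 / ((k : ℝ) + 1) := by
      rw [div_le_div_iff₀ hn' (by positivity : (0:ℝ) < (k:ℝ)+1)]
      nlinarith
    exact lt_of_le_of_lt h1 hk


lemma isOpen_gt_cnt (c : ℕ → ℤ) (i n t : ℕ) :
    IsOpen {x : Circle1 | t < cnt c x i n} := by
  rw [isOpen_iff_mem_nhds]
  intro x hx
  set s := (Finset.Icc 1 n).filter (fun m => 1 / ((i : ℝ) + 1) < ‖c m • x‖) with hs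
  have hopen : IsOpen (⋂ m ∈ s, {y : Circle1 | 1 / ((i : ℝ) + 1) < ‖c m • y‖}) := by
    refine isOpen_biInter_finset (fun m _ => ?_)
    exact isOpen_lt continuous_const ((continuous_norm).comp (continuous_zsmul (c m)))
  have hxmem : x ∈ ⋂ m ∈ s, {y : Circle1 | 1 / ((i : ℝ) + 1) < ‖c m • y‖} := by
    simp only [Set.mem_iInter]
    intro m hm
    exact (Finset.mem_filter.mp hm).2
  refine Filter.mem_of_superset (hopen.mem_nhds hxmem) (fun y hy => ?_)
  simp only [Set.mem_iInter] at hy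
  refine lt_of_lt_of_le hx (Finset.card_le_card ?_)
  intro m hm
  exact Finset.mem_filter.mpr ⟨(Finset.mem_filter.mp hm).1, hy m hm⟩

lemma isClosed_piece (c : ℕ → ℤ) (i k n : ℕ) :
    IsClosed {x : Circle1 | (k + 1) * cnt c x i n ≤ n} := by
  have : {x : Circle1 | (k + 1) * cnt c x i n ≤ n}
      = {x : Circle1 | n / (k + 1) < cnt c x i n}ᶜ := by
    ext x
    simp only [Set.mem_setOf_eq, Set.mem_compl_iff, not_lt]
    rw [Nat.le_div_iff_mul_le (Nat.succ_pos k), mul_comm]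
  rw [this]
  exact (isOpen_gt_cnt c i n _).isClosed_compl

end Aux
lemma mem_statCharSet_iff {c : ℕ → ℤ} {x : Circle1} :
    x ∈ statCharSet c ↔ ∀ i : ℕ, DensityZero {m : ℕ | 1 / ((i : ℝ) + 1) < ‖c m • x‖} := by
  simp only [statCharSet, Set.mem_setOf_eq, StatTendstoZero]
  constructor
  · intro h i
    have hh := h (1 / ((i : ℝ) + 1)) (by positivity)
    have hsub : {m : ℕ | 1 / ((i : ℝ) + 1) < ‖c m • x‖}
        ⊆ {n : ℕ | 1 / ((i : ℝ) + 1) ≤ ‖c n • x‖} := fun m hm => by simp only [Set.mem_setOf_eq] at hm ⊢; exact le_of_lt hm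
    exact densityZero_mono hsub hh
  · intro h ε hε
    obtain ⟨i, hi⟩ := exists_nat_one_div_lt hε
    have hsub : {n : ℕ | ε ≤ ‖c n • x‖}
        ⊆ {m : ℕ | 1 / ((i : ℝ) + 1) < ‖c m • x‖} := fun m hm => by simp only [Set.mem_setOf_eq] at hm ⊢; exact lt_of_lt_of_le hi hm
    exact densityZero_mono hsub (h i)
/-- **Theorem A.** `t^s_(aₙ)(𝕋)` is an `F_{σδ}` subgroup of `𝕋` containing `t_(aₙ)(𝕋)`. -/
theorem stmt_17 (c : ℕ → ℤ) :
    (∃ H : AddSubgroup Circle1, (H : Set Circle1) = statCharSet c) ∧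
    (∃ F : ℕ → ℕ → Set Circle1, (∀ i j, IsClosed (F i j)) ∧
        statCharSet c = ⋂ i : ℕ, ⋃ j : ℕ, F i j) ∧
    charSet c ⊆ statCharSet c := by
  refine ⟨?_, ?_, ?_⟩
  · -- subgroup
    have hzero : (0 : Circle1) ∈ statCharSet c := by
      intro ε hε
      have : {n : ℕ | ε ≤ ‖c n • (0 : Circle1)‖} = ∅ := by
        ext n; simp [smul_zero]; linarith
      rw [this]
      exact densityZero_of_finite (Set.finite_empty)
    have hadd : ∀ a b : Circle1, a ∈ statCharSet c → b ∈ statCharSet c →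
        a + b ∈ statCharSet c := by
      intro a b ha hb ε hε
      have h2 : (0 : ℝ) < ε / 2 := by linarith
      have hsub : {n : ℕ | ε ≤ ‖c n • (a + b)‖}
          ⊆ {n : ℕ | ε / 2 ≤ ‖c n • a‖} ∪ {n : ℕ | ε / 2 ≤ ‖c n • b‖} := by
        intro n hn
        by_contra hcon
        simp only [Set.mem_union, Set.mem_setOf_eq, not_or, not_le] at hcon
        have : ‖c n • (a + b)‖ ≤ ‖c n • a‖ + ‖c n • b‖ := by
          rw [smul_add]; exact norm_add_le _ _
        have hε' : ε ≤ ‖c n • (a + b)‖ := hn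
        linarith [hcon.1, hcon.2]
      exact densityZero_mono hsub (densityZero_union (ha _ h2) (hb _ h2))
    have hneg : ∀ a : Circle1, a ∈ statCharSet c → -a ∈ statCharSet c := by
      intro a ha ε hε
      have : {n : ℕ | ε ≤ ‖c n • (-a)‖} = {n : ℕ | ε ≤ ‖c n • a‖} := by
        ext n; simp [smul_neg]
      rw [this]
      exact ha ε hε
    refine ⟨{ carrier := statCharSet c, zero_mem' := hzero,
              add_mem' := (fun h1 h2 => hadd _ _ h1 h2),
              neg_mem' := (fun h1 => hneg _ h1) }, rfl⟩
  · -- F_σδ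
    refine ⟨fun i j => ⋂ n ∈ Set.Ici j,
      {x : Circle1 | (i.unpair.2 + 1) * cnt c x i.unpair.1 n ≤ n}, ?_, ?_⟩
    · intro i j
      exact isClosed_biInter (fun n _ => isClosed_piece c i.unpair.1 i.unpair.2 n)
    · ext x
      simp only [Set.mem_iInter, Set.mem_iUnion, Set.mem_Ici]
      rw [mem_statCharSet_iff]
      constructor
      · intro h i
        obtain ⟨N, hN⟩ := (densityZero_iff.mp (h i.unpair.1)) i.unpair.2
        refine ⟨N, fun n hn => ?_⟩
        have := hN n hn
        rwa [ncard_eq_cnt] at this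
      · intro h i
        rw [densityZero_iff]
        intro k
        obtain ⟨N, hN⟩ := h (Nat.pair i k)
        refine ⟨N, fun n hn => ?_⟩
        have := hN n hn
        rw [Nat.unpair_pair] at this
        rwa [ncard_eq_cnt]
  · -- inclusion
    intro x hx ε hε
    have hnorm : Tendsto (fun n => ‖c n • x‖) atTop (𝓝 0) := by
      simpa using (Filter.Tendsto.norm hx)
    have hev : ∀ᶠ n in atTop, ‖c n • x‖ < ε := hnorm.eventually_lt_const hε
    obtain ⟨N, hN⟩ := eventually_atTop.mp hev
    refine densityZero_mono (B := Set.Iio N) (fun n hn => ?_)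
      (densityZero_of_finite (Set.finite_Iio N))
    by_contra hcon
    simp only [Set.mem_Iio, not_lt] at hcon
    exact absurd (hN n hcon) (not_lt.mpr hn)
end
end

section
/- Let α = [0; a₁, a₂, …] ∈ (0,1) be irrational with denominators of convergents (qₙ), and let (xₙ) be the increasing enumeration of the set {r qₙ : n ∈ ℕ, 1 ≤ r ≤ a_{n+1}}. Then the characterized subgroup t_{(xₙ)}(𝕋) is countably infinite; more precisely t_{(xₙ)}(𝕋) = ⟨α⟩, the cyclic subgroup of 𝕋 generated by (the class of) α. -/
open Filter Topology

noncomputable section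

open CF

section BDS
variable {α : ℝ} (hα : α ∈ Set.Ioo (0 : ℝ) 1) (hirr : Irrational α)
include hα hirr

lemma BDS_G_prop : ∀ n, Irrational (G α n) ∧ G α n ∈ Set.Ioo (0 : ℝ) 1 := by
  intro n
  induction n with
  | zero => exact ⟨hirr, hα⟩
  | succ n ih =>
    obtain ⟨h1, h2, h3⟩ := ih
    have hne : G α n ≠ 0 := ne_of_gt h2
    have hinv : Irrational (G α n)⁻¹ := h1.inv
    have hfr : Irrational (Int.fract (G α n)⁻¹) := by
      rw [← Int.self_sub_floor]
      exact hinv.sub_intCast ⌊(G α n)⁻¹⌋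
    refine ⟨hfr, ?_, ?_⟩
    · rcases (Int.fract_nonneg (G α n)⁻¹).lt_or_eq with h | h
      · exact h
      · exact absurd h.symm (by simpa using hfr.ne_int 0)
    · exact Int.fract_lt_one _

lemma BDS_G_pos (n : ℕ) : 0 < G α n := (BDS_G_prop hα hirr n).2.1
lemma BDS_G_lt_one (n : ℕ) : G α n < 1 := (BDS_G_prop hα hirr n).2.2

lemma BDS_Ginv_gt_one (n : ℕ) : 1 < (G α n)⁻¹ :=
  (one_lt_inv₀ (BDS_G_pos hα hirr n)).mpr (BDS_G_lt_one hα hirr n)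

lemma BDS_a_pos (n : ℕ) : 1 ≤ a α (n + 1) := by
  have := BDS_Ginv_gt_one hα hirr n
  exact Nat.le_floor (by linarith)

lemma BDS_G_rec (n : ℕ) : G α (n + 1) = (G α n)⁻¹ - (a α (n + 1) : ℝ) := by
  have h1 : (0:ℝ) ≤ (G α n)⁻¹ := le_of_lt (by linarith [BDS_Ginv_gt_one hα hirr n])
  show Int.fract (G α n)⁻¹ = _
  rw [Int.fract]
  congr 1
  rw [show ((a α (n+1) : ℕ) : ℝ) = ((⌊(G α n)⁻¹⌋₊ : ℕ) : ℝ) from rfl]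
  rw [natCast_floor_eq_intCast_floor h1]


/-- `β n = ∏_{i≤n} G i = |q n * α - p n|`. -/
def BDS_β (α : ℝ) (n : ℕ) : ℝ := ∏ i ∈ Finset.range (n + 1), G α i

omit hα hirr in
lemma BDS_β_zero : BDS_β α 0 = α := by simp [BDS_β, G]

omit hα hirr in
lemma BDS_β_succ (n : ℕ) : BDS_β α (n + 1) = BDS_β α n * G α (n + 1) :=
  Finset.prod_range_succ _ _

lemma BDS_β_pos (n : ℕ) : 0 < BDS_β α n :=
  Finset.prod_pos fun i _ => BDS_G_pos hα hirr i

lemma BDS_β_lt_one (n : ℕ) : BDS_β α n < 1 := by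
  induction n with
  | zero => rw [BDS_β_zero]; exact hα.2
  | succ n ih =>
    rw [BDS_β_succ]
    have h1 := BDS_β_pos hα hirr n
    have h2 := BDS_G_pos hα hirr (n + 1)
    have h3 := BDS_G_lt_one hα hirr (n + 1)
    nlinarith

lemma BDS_β_succ_lt (n : ℕ) : BDS_β α (n + 1) < BDS_β α n := by
  rw [BDS_β_succ]
  have h1 := BDS_β_pos hα hirr n
  have h2 := BDS_G_lt_one hα hirr (n + 1)
  have h3 := BDS_G_pos hα hirr (n + 1)
  nlinarith

lemma BDS_β_anti : StrictAnti (BDS_β α) :=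
  strictAnti_nat_of_succ_lt (BDS_β_succ_lt hα hirr)

lemma BDS_β_rec (n : ℕ) :
    BDS_β α (n + 2) = BDS_β α n - (a α (n + 2) : ℝ) * BDS_β α (n + 1) := by
  have hne : G α (n + 1) ≠ 0 := ne_of_gt (BDS_G_pos hα hirr (n + 1))
  have h := BDS_G_rec hα hirr (n + 1)
  rw [BDS_β_succ, BDS_β_succ, h]
  field_simp

omit hα hirr in
lemma BDS_θ_rec (n : ℕ) :
    θ α (n + 2) = (a α (n + 2) : ℝ) * θ α (n + 1) + θ α n := by
  simp only [θ, q, p]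
  push_cast
  ring

lemma BDS_θ_eq (n : ℕ) : θ α n = (-1 : ℝ) ^ n * BDS_β α n := by
  have key : ∀ m, θ α m = (-1 : ℝ) ^ m * BDS_β α m ∧
      θ α (m + 1) = (-1 : ℝ) ^ (m + 1) * BDS_β α (m + 1) := by
    intro m
    induction m with
    | zero =>
      constructor
      · have hb : BDS_β α 0 = α := BDS_β_zero
        simp [θ, q, p, hb]
      · have h := BDS_G_rec hα hirr 0
        have hne : α ≠ 0 := ne_of_gt hα.1
        simp only [θ, q, p, BDS_β_succ, BDS_β_zero]
        rw [show G α 0 = α from rfl] at h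
        rw [h]
        field_simp
        ring
    | succ m ih =>
      refine ⟨ih.2, ?_⟩
      rw [BDS_θ_rec m, BDS_β_rec hα hirr m, ih.1, ih.2]
      ring
  exact (key n).1

lemma BDS_absθ (n : ℕ) : |θ α n| = BDS_β α n := by
  rw [BDS_θ_eq hα hirr n, abs_mul, abs_pow, abs_neg, abs_one, one_pow, one_mul,
    abs_of_pos (BDS_β_pos hα hirr n)]

lemma BDS_β_half (n : ℕ) : BDS_β α (n + 2) ≤ BDS_β α n / 2 := by
  have hβn := BDS_β_pos hα hirr n
  have hg1 := BDS_G_pos hα hirr (n + 1)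
  have hg2 := BDS_G_lt_one hα hirr (n + 1)
  rcases le_or_gt (G α (n + 1)) (1 / 2) with h | h
  · have h2 := BDS_G_lt_one hα hirr (n + 1 + 1)
    have h3 := BDS_G_pos hα hirr (n + 1 + 1)
    rw [BDS_β_succ, BDS_β_succ]
    nlinarith [mul_pos hβn hg1]
  · have ha : (1 : ℝ) ≤ (a α (n + 2) : ℝ) := by
      exact_mod_cast BDS_a_pos hα hirr (n + 1)
    have hβ1 : BDS_β α (n + 1) = BDS_β α n * G α (n + 1) := BDS_β_succ n
    have := BDS_β_rec hα hirr n
    have hb1pos := BDS_β_pos hα hirr (n + 1)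
    nlinarith

lemma BDS_β_le_pow (n : ℕ) : BDS_β α n ≤ (1 / 2 : ℝ) ^ (n / 2) := by
  have key : ∀ m, BDS_β α m ≤ (1 / 2 : ℝ) ^ (m / 2) ∧
      BDS_β α (m + 1) ≤ (1 / 2 : ℝ) ^ ((m + 1) / 2) := by
    intro m
    induction m with
    | zero =>
      constructor
      · simpa [BDS_β_zero] using hα.2.le
      · have := BDS_β_succ_lt hα hirr 0
        have := BDS_β_lt_one hα hirr 0
        simpa using by linarith
    | succ m ih =>
      refine ⟨ih.2, ?_⟩
      have h := BDS_β_half hα hirr m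
      have : (m + 1 + 1) / 2 = m / 2 + 1 := by omega
      rw [this, pow_succ]
      calc BDS_β α (m + 2) ≤ BDS_β α m / 2 := h
        _ ≤ (1 / 2 : ℝ) ^ (m / 2) * (1 / 2) := by linarith [ih.1]
  exact (key n).1

lemma BDS_β_tendsto : Tendsto (BDS_β α) atTop (𝓝 0) := by
  have h1 : Tendsto (fun n : ℕ => (1 / 2 : ℝ) ^ (n / 2)) atTop (𝓝 0) := by
    have hhalf : Tendsto (fun k : ℕ => (1 / 2 : ℝ) ^ k) atTop (𝓝 0) := by
      apply tendsto_pow_atTop_nhds_zero_of_lt_one <;> norm_num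
    have hdiv : Tendsto (fun n : ℕ => n / 2) atTop atTop :=
      tendsto_atTop_atTop.mpr fun b => ⟨2 * b, fun n hn => by omega⟩
    exact hhalf.comp hdiv
  refine squeeze_zero (fun n => (BDS_β_pos hα hirr n).le) (BDS_β_le_pow hα hirr) h1

lemma BDS_q_pos : ∀ n, 1 ≤ q α n := by
  have key : ∀ m, 1 ≤ q α m ∧ 1 ≤ q α (m + 1) := by
    intro m
    induction m with
    | zero => exact ⟨le_refl _, BDS_a_pos hα hirr 0⟩
    | succ m ih =>
      refine ⟨ih.2, ?_⟩
      show 1 ≤ a α (m + 2) * q α (m + 1) + q α m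
      have := BDS_a_pos hα hirr (m + 1)
      nlinarith [ih.1, ih.2]
  exact fun n => (key n).1

lemma BDS_q_mono : Monotone (q α) := by
  apply monotone_nat_of_le_succ
  intro n
  match n with
  | 0 => exact BDS_a_pos hα hirr 0
  | Nat.succ m =>
    show q α (m + 1) ≤ a α (m + 2) * q α (m + 1) + q α m
    nlinarith [BDS_a_pos hα hirr (m + 1), BDS_q_pos hα hirr m, BDS_q_pos hα hirr (m + 1)]

lemma BDS_q_ge (n : ℕ) : n ≤ q α n := by
  have key : ∀ m, m ≤ q α m ∧ m + 1 ≤ q α (m + 1) := by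
    intro m
    induction m with
    | zero => exact ⟨Nat.zero_le _, BDS_a_pos hα hirr 0⟩
    | succ m ih =>
      refine ⟨ih.2, ?_⟩
      show m + 2 ≤ a α (m + 2) * q α (m + 1) + q α m
      have h1 := BDS_a_pos hα hirr (m + 1)
      have h2 := BDS_q_pos hα hirr m
      nlinarith [ih.2]
  exact (key n).1

lemma BDS_aq_le (n : ℕ) : a α (n + 1) * q α n ≤ q α (n + 1) := by
  match n with
  | 0 => simp [q]
  | Nat.succ m => show a α (m + 2) * q α (m + 1) ≤ a α (m + 2) * q α (m + 1) + q α m; omega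

lemma BDS_q_le_two_aq (n : ℕ) : q α (n + 1) ≤ 2 * (a α (n + 1) * q α n) := by
  match n with
  | 0 => show a α 1 ≤ 2 * (a α 1 * 1); omega
  | Nat.succ m =>
    show a α (m + 2) * q α (m + 1) + q α m ≤ 2 * (a α (m + 2) * q α (m + 1))
    have h1 := BDS_a_pos hα hirr (m + 1)
    have h2 := BDS_q_mono hα hirr (Nat.le_succ m)
    nlinarith [BDS_q_pos hα hirr m]

omit hα hirr in
lemma BDS_det (n : ℕ) : (p α (n + 1) : ℤ) * q α n - (p α n : ℤ) * q α (n + 1) = (-1) ^ n := by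
  induction n with
  | zero => simp [p, q]
  | succ n ih =>
    have e1 : (p α (n + 2) : ℤ) = a α (n + 2) * p α (n + 1) + p α n := by
      show ((a α (n + 2) * p α (n + 1) + p α n : ℕ) : ℤ) = _; push_cast; ring
    have e2 : (q α (n + 2) : ℤ) = a α (n + 2) * q α (n + 1) + q α n := by
      show ((a α (n + 2) * q α (n + 1) + q α n : ℕ) : ℤ) = _; push_cast; ring
    rw [show n + 1 + 1 = n + 2 from rfl, e1, e2, pow_succ]
    linear_combination (-1 : ℤ) * ih

omit hα hirr in
lemma BDS_theta_comb (n : ℕ) (μ ν : ℤ) :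
    (μ : ℝ) * θ α n + (ν : ℝ) * θ α (n + 1) =
      ((μ * q α n + ν * q α (n + 1) : ℤ) : ℝ) * α - ((μ * p α n + ν * p α (n + 1) : ℤ) : ℝ) := by
  simp only [θ]
  push_cast
  ring

omit hα hirr in
lemma BDS_abs_add_of_mul_nonneg {u v : ℝ} (h : 0 ≤ u * v) : |u + v| = |u| + |v| := by
  rcases le_or_gt 0 u with hu | hu <;> rcases le_or_gt 0 v with hv | hv
  · rw [abs_of_nonneg hu, abs_of_nonneg hv, abs_of_nonneg (by linarith)]
  · have : u = 0 := by nlinarith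
    simp [this]
  · have : v = 0 := by nlinarith
    simp [this]
  · rw [abs_of_nonpos hu.le, abs_of_nonpos hv.le, abs_of_nonpos (by linarith)]
    ring

/-- Best-approximation inequality: if `0 < |K| < q (n+1)` then `|Kα - L| ≥ β n`. -/
lemma BDS_best (n : ℕ) (K L : ℤ) (hK0 : K ≠ 0) (hK : |K| < (q α (n + 1) : ℤ)) :
    BDS_β α n ≤ |(K : ℝ) * α - L| := by
  set μ : ℤ := (-1) ^ n * ((p α (n + 1) : ℤ) * K - (q α (n + 1) : ℤ) * L) with hμ
  set ν : ℤ := (-1) ^ n * ((q α n : ℤ) * L - (p α n : ℤ) * K) with hν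
  have hdet := BDS_det (α := α) n
  have hsq : ((-1 : ℤ) ^ n) * ((-1 : ℤ) ^ n) = 1 := by
    rw [← pow_add]; exact (neg_one_pow_eq_one_iff_even (by norm_num)).mpr ⟨n, by ring⟩
  have hKeq : μ * q α n + ν * q α (n + 1) = K := by
    rw [hμ, hν]; linear_combination ((-1:ℤ)^n * K) * hdet + K * hsq
  have hLeq : μ * p α n + ν * p α (n + 1) = L := by
    rw [hμ, hν]; linear_combination ((-1:ℤ)^n * L) * hdet + L * hsq
  have hθn := BDS_θ_eq hα hirr n
  have hθn1 := BDS_θ_eq hα hirr (n + 1)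
  have hβn := BDS_β_pos hα hirr n
  have hβn1 := BDS_β_pos hα hirr (n + 1)
  have hqn : (1 : ℤ) ≤ (q α n : ℤ) := by exact_mod_cast BDS_q_pos hα hirr n
  have hqn1 : (1 : ℤ) ≤ (q α (n + 1) : ℤ) := by exact_mod_cast BDS_q_pos hα hirr (n + 1)
  have hcomb : (K : ℝ) * α - L = (μ : ℝ) * θ α n + (ν : ℝ) * θ α (n + 1) := by
    rw [BDS_theta_comb, hKeq, hLeq]
  rw [hcomb]
  rcases eq_or_ne ν 0 with hv | hv
  · have hKμ : K = μ * q α n := by rw [← hKeq, hv]; ring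
    have hμ0 : μ ≠ 0 := fun h0 => hK0 (by rw [hKμ, h0, zero_mul])
    have hμ1 : (1 : ℝ) ≤ |(μ : ℝ)| := by
      have := Int.one_le_abs hμ0
      exact_mod_cast this
    rw [hv]
    simp only [Int.cast_zero, zero_mul, add_zero]
    rw [abs_mul, BDS_absθ hα hirr n]
    nlinarith
  · rcases eq_or_ne μ 0 with hu | hu
    · exfalso
      have hKν : K = ν * q α (n + 1) := by rw [← hKeq, hu]; ring
      have hν1 := Int.one_le_abs hv
      have : (q α (n + 1) : ℤ) ≤ |K| := by
        rw [hKν, abs_mul, abs_of_nonneg (by positivity : (0 : ℤ) ≤ (q α (n + 1) : ℤ))]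
        nlinarith
      omega
    · have hμν : μ * ν < 0 := by
        rcases lt_trichotomy (μ * ν) 0 with h | h | h
        · exact h
        · rcases mul_eq_zero.mp h with h' | h' <;> [exact absurd h' hu; exact absurd h' hv]
        · exfalso
          rcases lt_or_gt_of_ne hu with hμneg | hμpos
          · have hνneg : ν < 0 := by nlinarith
            have hKle : K ≤ -((q α n : ℤ) + (q α (n + 1) : ℤ)) := by
              rw [← hKeq]; nlinarith
            have : (q α (n + 1) : ℤ) ≤ |K| := by
              rw [abs_of_nonpos (by linarith)]; linarith
            omega
          · have hνpos : 0 < ν := by nlinarith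
            have hKge : ((q α n : ℤ) + (q α (n + 1) : ℤ)) ≤ K := by
              rw [← hKeq]; nlinarith
            have : (q α (n + 1) : ℤ) ≤ |K| := by
              rw [abs_of_nonneg (by linarith)]; linarith
            omega
      have h2 : ((-1 : ℝ)) ^ n * (-1) ^ (n + 1) = -1 := by
        rw [← pow_add]
        exact Odd.neg_one_pow ⟨n, by ring⟩
      have hμνR : ((μ : ℝ)) * ν < 0 := by exact_mod_cast hμν
      have hprod : 0 ≤ ((μ : ℝ) * θ α n) * ((ν : ℝ) * θ α (n + 1)) := by
        have e : ((μ : ℝ) * θ α n) * ((ν : ℝ) * θ α (n + 1)) =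
            ((μ : ℝ) * ν) * ((-1 : ℝ) ^ n * (-1) ^ (n + 1)) *
              (BDS_β α n * BDS_β α (n + 1)) := by
          rw [hθn, hθn1]; ring
        rw [e, h2]
        nlinarith [mul_pos hβn hβn1]
      rw [BDS_abs_add_of_mul_nonneg hprod, abs_mul, abs_mul, BDS_absθ hα hirr n,
        BDS_absθ hα hirr (n + 1)]
      have hμ1 : (1 : ℝ) ≤ |(μ : ℝ)| := by
        have := Int.one_le_abs hu
        exact_mod_cast this
      nlinarith [abs_nonneg ((ν : ℝ))]

end BDS

section CircleHelpers

lemma BDS_norm1 (t : ℝ) : ‖(t : Circle1)‖ = |t - round t| := by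
  have := AddCircle.norm_eq (p := (1 : ℝ)) (x := t)
  simpa using this

lemma BDS_norm_coe_le (t : ℝ) : ‖(t : Circle1)‖ ≤ |t| := by
  rw [BDS_norm1]
  simpa using round_le t 0

lemma BDS_norm_coe_eq (t : ℝ) (h : |t| ≤ 1 / 2) : ‖(t : Circle1)‖ = |t| := by
  refine (AddCircle.norm_coe_eq_abs_iff (1 : ℝ) one_ne_zero).mpr ?_
  simpa using h

lemma BDS_int_coe (c : ℤ) : (((c : ℝ)) : Circle1) = 0 :=
  (AddCircle.coe_eq_zero_iff (1:ℝ)).mpr ⟨c, by simp⟩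

lemma BDS_coe_add_int (t : ℝ) (c : ℤ) : ((t + (c : ℝ) : ℝ) : Circle1) = (t : Circle1) := by
  rw [AddCircle.coe_add, BDS_int_coe, add_zero]

lemma BDS_zsmul_coe (k : ℤ) (t : ℝ) :
    k • ((t : ℝ) : Circle1) = (((k : ℝ) * t : ℝ) : Circle1) := by
  rw [← AddCircle.coe_zsmul, zsmul_eq_mul]

end CircleHelpers

lemma BDS_mult_bound {u ε : ℝ} (hu : |u| ≤ 1 / 2) (hε : 0 < ε) (hε4 : ε ≤ 1 / 4) (R : ℕ)
    (hR : 1 ≤ R) (h : ∀ r : ℕ, 1 ≤ r → r ≤ R → ‖(((r : ℝ) * u : ℝ) : Circle1)‖ < ε) :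
    ∀ r : ℕ, r ≤ R → (r : ℝ) * |u| < ε := by
  have h1 : |u| < ε := by
    have := h 1 le_rfl hR
    rwa [Nat.cast_one, one_mul, BDS_norm_coe_eq u hu] at this
  intro r
  induction r with
  | zero => intro _; simpa using hε
  | succ r ih =>
    intro hr
    have h2 : (r : ℝ) * |u| < ε := ih (by omega)
    have habs : |((r : ℝ) + 1) * u| < 2 * ε := by
      have e1 : ((r : ℝ) + 1) * u = (r : ℝ) * u + u := by ring
      calc |((r : ℝ) + 1) * u| ≤ |(r : ℝ) * u| + |u| := by rw [e1]; exact abs_add_le _ _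
        _ = (r : ℝ) * |u| + |u| := by rw [abs_mul, abs_of_nonneg (by positivity : (0:ℝ) ≤ (r:ℝ))]
        _ < ε + ε := by linarith
        _ = 2 * ε := by ring
    have hle : |((r : ℝ) + 1) * u| ≤ 1 / 2 := by linarith
    have h3 := h (r + 1) (by omega) hr
    rw [show (((r + 1 : ℕ) : ℝ)) = (r : ℝ) + 1 by push_cast; ring,
      BDS_norm_coe_eq _ hle] at h3
    calc ((r + 1 : ℕ) : ℝ) * |u| = |((r : ℝ) + 1)| * |u| := by
          push_cast; rw [abs_of_nonneg (by positivity : (0:ℝ) ≤ (r:ℝ) + 1)]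
      _ = |((r : ℝ) + 1) * u| := (abs_mul _ _).symm
      _ < ε := h3

section Main
variable {α : ℝ} (hα : α ∈ Set.Ioo (0 : ℝ) 1) (hirr : Irrational α)
  {x : ℕ → ℕ} (hmono : StrictMono x)
  (hrange : Set.range x =
    {m : ℕ | ∃ n r : ℕ, 1 ≤ r ∧ r ≤ a α (n + 1) ∧ m = r * q α n})
include hα hirr hmono hrange

lemma BDS_stepA (y : ℝ) (H : Tendsto (fun m => (x m : ℤ) • ((y : ℝ) : Circle1)) atTop (𝓝 0))
    {ε : ℝ} (hε : 0 < ε) (hε4 : ε ≤ 1 / 4) :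
    ∃ N, ∀ n, N ≤ n →
      (a α (n + 1) : ℝ) * |(q α n : ℝ) * y - round ((q α n : ℝ) * y)| < ε := by
  rw [NormedAddCommGroup.tendsto_nhds_zero] at H
  obtain ⟨M, hM⟩ := eventually_atTop.mp (H ε hε)
  refine ⟨x M + 1, fun n hn => ?_⟩
  set u : ℝ := (q α n : ℝ) * y - round ((q α n : ℝ) * y) with hu_def
  have hu : |u| ≤ 1 / 2 := abs_sub_round _
  have hR : 1 ≤ a α (n + 1) := BDS_a_pos hα hirr n
  have hqn : x M < q α n := lt_of_lt_of_le (by omega) (le_trans hn (BDS_q_ge hα hirr n))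
  have key : ∀ r : ℕ, 1 ≤ r → r ≤ a α (n + 1) → ‖(((r : ℝ) * u : ℝ) : Circle1)‖ < ε := by
    intro r h1 h2
    have hmem : r * q α n ∈ Set.range x := by
      rw [hrange]; exact ⟨n, r, h1, h2, rfl⟩
    obtain ⟨m, hm⟩ := hmem
    have hxm : x M < x m := by
      rw [hm]
      calc x M < q α n := hqn
        _ ≤ r * q α n := Nat.le_mul_of_pos_left _ h1
    have hMm : M ≤ m := (hmono.lt_iff_lt.mp hxm).le
    have hsmall := hM m hMm
    rw [BDS_zsmul_coe] at hsmall
    have hval : ((x m : ℤ) : ℝ) * y =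
        (r : ℝ) * u + ((r * round ((q α n : ℝ) * y) : ℤ) : ℝ) := by
      rw [hm]; push_cast; rw [hu_def]; ring
    rwa [hval, BDS_coe_add_int] at hsmall
  have := BDS_mult_bound hu hε hε4 (a α (n + 1)) hR key (a α (n + 1)) le_rfl
  exact this

omit hmono hrange in
lemma BDS_aβ_le (n : ℕ) : (a α (n + 2) : ℝ) * BDS_β α (n + 1) ≤ BDS_β α n := by
  have h := BDS_β_rec hα hirr n
  have h2 := BDS_β_pos hα hirr (n + 2)
  linarith

omit hmono hrange in
lemma BDS_eps_beta {δ : ℝ} (hδ : 0 < δ) : ∃ N, ∀ j, N ≤ j → BDS_β α j < δ := by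
  have hβ0 := BDS_β_tendsto hα hirr
  exact eventually_atTop.mp (hβ0.eventually (gt_mem_nhds hδ))

lemma BDS_easy (k : ℤ) :
    Tendsto (fun m => (x m : ℤ) • (k • ((α : ℝ) : Circle1))) atTop (𝓝 0) := by
  rw [NormedAddCommGroup.tendsto_nhds_zero]
  intro ε hε
  have hδ : (0 : ℝ) < ε / (|(k : ℝ)| + 1) := by positivity
  obtain ⟨N, hN⟩ := BDS_eps_beta hα hirr hδ
  filter_upwards [eventually_ge_atTop (q α (N + 2) + 1)] with m hm
  have hmem : x m ∈ Set.range x := ⟨m, rfl⟩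
  rw [hrange] at hmem
  obtain ⟨n, r, h1, h2, hx⟩ := hmem
  have hxm_gt : q α (N + 2) < x m := lt_of_lt_of_le (by omega) (le_trans hm hmono.le_apply)
  have hxm_le : x m ≤ q α (n + 1) := by
    rw [hx]
    calc r * q α n ≤ a α (n + 1) * q α n := Nat.mul_le_mul_right _ h2
      _ ≤ q α (n + 1) := BDS_aq_le hα hirr n
  have hn : N + 2 ≤ n := by
    by_contra hc
    push_neg at hc
    have : q α (n + 1) ≤ q α (N + 2) := BDS_q_mono hα hirr (by omega)
    omega
  obtain ⟨j, rfl⟩ : ∃ j, n = j + 2 := ⟨n - 2, by omega⟩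
  have hj : N ≤ j + 1 := by omega
  -- compute the point
  rw [smul_comm, BDS_zsmul_coe]
  have hxR : ((x m : ℤ) : ℝ) = (r : ℝ) * (q α (j + 2) : ℝ) := by exact_mod_cast hx
  have hval : (k : ℝ) * (((x m : ℤ) : ℝ) * α) =
      (k : ℝ) * (r : ℝ) * θ α (j + 2) + ((k * (r * (p α (j + 2) : ℤ)) : ℤ) : ℝ) := by
    rw [hxR]; simp only [θ]; push_cast; ring
  rw [BDS_zsmul_coe, hval, BDS_coe_add_int]
  have hβpos := BDS_β_pos hα hirr (j + 2)
  have hr : (r : ℝ) ≤ (a α (j + 3) : ℝ) := by exact_mod_cast h2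
  have haβ : (a α (j + 3) : ℝ) * BDS_β α (j + 2) ≤ BDS_β α (j + 1) := BDS_aβ_le hα hirr (j + 1)
  have hβN := hN (j + 1) hj
  have hrpos : (0 : ℝ) ≤ (r : ℝ) := Nat.cast_nonneg r
  have habs : |(k : ℝ) * (r : ℝ) * θ α (j + 2)| = |(k : ℝ)| * ((r : ℝ) * BDS_β α (j + 2)) := by
    rw [abs_mul, abs_mul, BDS_absθ hα hirr, abs_of_nonneg hrpos, mul_assoc]
  have hrβ : (r : ℝ) * BDS_β α (j + 2) < ε / (|(k : ℝ)| + 1) := by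
    calc (r : ℝ) * BDS_β α (j + 2) ≤ (a α (j + 3) : ℝ) * BDS_β α (j + 2) := by
          exact mul_le_mul_of_nonneg_right hr hβpos.le
      _ ≤ BDS_β α (j + 1) := haβ
      _ < ε / (|(k : ℝ)| + 1) := hβN
  have hA1 : (0 : ℝ) < |(k : ℝ)| + 1 := by positivity
  calc ‖((((k : ℝ) * (r : ℝ) * θ α (j + 2) : ℝ)) : Circle1)‖
      ≤ |(k : ℝ) * (r : ℝ) * θ α (j + 2)| := BDS_norm_coe_le _
    _ = |(k : ℝ)| * ((r : ℝ) * BDS_β α (j + 2)) := habs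
    _ ≤ |(k : ℝ)| * (ε / (|(k : ℝ)| + 1)) := by
        exact mul_le_mul_of_nonneg_left hrβ.le (abs_nonneg _)
    _ < ε := by
        rw [mul_div_assoc']
        rw [div_lt_iff₀ hA1]
        nlinarith [abs_nonneg ((k : ℝ))]

lemma BDS_hard (y : ℝ)
    (H : Tendsto (fun m => (x m : ℤ) • ((y : ℝ) : Circle1)) atTop (𝓝 0)) :
    ∃ K L : ℤ, y = (K : ℝ) * α + L := by
  classical
  set c : ℕ → ℤ := fun j => round ((q α j : ℝ) * y) with hc_def
  set e : ℕ → ℝ := fun j => (q α j : ℝ) * y - c j with he_def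
  obtain ⟨N, hN⟩ := BDS_stepA hα hirr hmono hrange y H
    (ε := 1 / 16) (by norm_num) (by norm_num)
  have he_half : ∀ n, |e n| ≤ 1 / 2 := fun n => abs_sub_round _
  have ha1 : ∀ n, (1 : ℝ) ≤ (a α (n + 1) : ℝ) := fun n => by
    exact_mod_cast BDS_a_pos hα hirr n
  have he_small : ∀ n, N ≤ n → |e n| < 1 / 16 := by
    intro n hn
    have h := hN n hn
    nlinarith [abs_nonneg (e n), ha1 n]
  set k : ℕ → ℤ := fun n => (-1) ^ n * (c (n + 1) * q α n - c n * q α (n + 1)) with hk_def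
  set l : ℕ → ℤ := fun n =>
    (-1) ^ (n + 1) * (c (n + 1) * p α n - c n * p α (n + 1)) with hl_def
  have hdetR : ∀ n, (q α (n + 1) : ℝ) * θ α n - (q α n : ℝ) * θ α (n + 1) = (-1) ^ n := by
    intro n
    have hdz := BDS_det (α := α) n
    have hdR : ((p α (n + 1) : ℝ)) * (q α n : ℝ) - ((p α n : ℝ)) * (q α (n + 1) : ℝ)
        = (-1) ^ n := by exact_mod_cast hdz
    simp only [θ]
    linear_combination hdR
  have hcR : ∀ j, (c j : ℝ) = (q α j : ℝ) * y - e j := by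
    intro j
    rw [he_def]
    ring
  have hsq : ∀ n : ℕ, ((-1 : ℝ)) ^ n * (-1) ^ n = 1 := by
    intro n
    rw [← pow_add]
    exact Even.neg_one_pow ⟨n, by ring⟩
  have hEQ : ∀ n, (k n : ℝ) * α + (l n : ℝ) =
      y - (-1 : ℝ) ^ n * (e (n + 1) * θ α n - e n * θ α (n + 1)) := by
    intro n
    have step1 : (k n : ℝ) * α + (l n : ℝ) =
        (-1 : ℝ) ^ n * ((c (n + 1) : ℝ) * θ α n - (c n : ℝ) * θ α (n + 1)) := by
      rw [hk_def, hl_def]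
      simp only [θ]
      push_cast
      ring
    rw [step1, hcR (n + 1), hcR n]
    linear_combination ((-1 : ℝ) ^ n * y) * hdetR n + y * hsq n
  have hkR : ∀ n, (k n : ℝ) =
      (-1 : ℝ) ^ n * (e n * (q α (n + 1) : ℝ) - e (n + 1) * (q α n : ℝ)) := by
    intro n
    rw [hk_def]
    push_cast
    rw [hcR (n + 1), hcR n]
    ring
  have hq_cast : ∀ n, (q α (n + 1) : ℝ) ≤ 2 * ((a α (n + 1) : ℝ) * (q α n : ℝ)) := by
    intro n
    have := BDS_q_le_two_aq hα hirr n
    exact_mod_cast this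
  have hq_le : ∀ n : ℕ, (q α n : ℝ) ≤ (q α (n + 1) : ℝ) := by
    intro n
    exact_mod_cast BDS_q_mono hα hirr (Nat.le_succ n)
  have hq_nonneg : ∀ n : ℕ, (0 : ℝ) ≤ (q α n : ℝ) := fun n => Nat.cast_nonneg _
  have hq_one : ∀ n : ℕ, (1 : ℝ) ≤ (q α n : ℝ) := fun n => by
    exact_mod_cast BDS_q_pos hα hirr n
  have hkb : ∀ n, N ≤ n → |(k n : ℝ)| < (3 / 16) * (q α n : ℝ) := by
    intro n hn
    have h1 : |e n| * (q α (n + 1) : ℝ) < 2 * (1 / 16) * (q α n : ℝ) := by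
      have hEq := hN n hn
      calc |e n| * (q α (n + 1) : ℝ) ≤ |e n| * (2 * ((a α (n + 1) : ℝ) * (q α n : ℝ))) :=
            mul_le_mul_of_nonneg_left (hq_cast n) (abs_nonneg _)
        _ = 2 * ((a α (n + 1) : ℝ) * |e n|) * (q α n : ℝ) := by ring
        _ < 2 * (1 / 16) * (q α n : ℝ) := by
            have := hq_one n
            nlinarith
    have h2 : |e (n + 1)| * (q α n : ℝ) < (1 / 16) * (q α n : ℝ) := by
      have := he_small (n + 1) (by omega)
      have := hq_one n
      nlinarith
    have htri : |(k n : ℝ)| ≤ |e n| * (q α (n + 1) : ℝ) + |e (n + 1)| * (q α n : ℝ) := by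
      rw [hkR n]
      rw [abs_mul, abs_pow, abs_neg, abs_one, one_pow, one_mul]
      calc |e n * (q α (n + 1) : ℝ) - e (n + 1) * (q α n : ℝ)|
          ≤ |e n * (q α (n + 1) : ℝ)| + |e (n + 1) * (q α n : ℝ)| := abs_sub _ _
        _ = |e n| * (q α (n + 1) : ℝ) + |e (n + 1)| * (q α n : ℝ) := by
            rw [abs_mul, abs_mul, abs_of_nonneg (hq_nonneg _), abs_of_nonneg (hq_nonneg _)]
    linarith
  have hstep : ∀ n, N ≤ n → k (n + 1) = k n ∧ l (n + 1) = l n := by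
    intro n hn
    set K : ℤ := k (n + 1) - k n with hK_def
    set L : ℤ := l (n + 1) - l n with hL_def
    have hβn := BDS_β_pos hα hirr n
    have hβn1 := BDS_β_pos hα hirr (n + 1)
    have hβn2 := BDS_β_pos hα hirr (n + 2)
    have hβd1 : BDS_β α (n + 1) ≤ BDS_β α n := (BDS_β_succ_lt hα hirr n).le
    have hβd2 : BDS_β α (n + 2) ≤ BDS_β α (n + 1) := (BDS_β_succ_lt hα hirr (n + 1)).le
    have hKL : (K : ℝ) * α + (L : ℝ) =
        (-1 : ℝ) ^ n * (e (n + 1) * θ α n - e n * θ α (n + 1)) -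
          (-1 : ℝ) ^ (n + 1) * (e (n + 2) * θ α (n + 1) - e (n + 1) * θ α (n + 2)) := by
      have h1 := hEQ n
      have h2 := hEQ (n + 1)
      rw [hK_def, hL_def]
      push_cast
      linear_combination h2 - h1
    have habs1 : |(K : ℝ) * α + L| < BDS_β α n := by
      rw [hKL]
      have b1 : |(-1 : ℝ) ^ n * (e (n + 1) * θ α n - e n * θ α (n + 1))|
          ≤ |e (n + 1)| * BDS_β α n + |e n| * BDS_β α (n + 1) := by
        rw [abs_mul, abs_pow, abs_neg, abs_one, one_pow, one_mul]
        calc |e (n + 1) * θ α n - e n * θ α (n + 1)|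
            ≤ |e (n + 1) * θ α n| + |e n * θ α (n + 1)| := abs_sub _ _
          _ = |e (n + 1)| * BDS_β α n + |e n| * BDS_β α (n + 1) := by
              rw [abs_mul, abs_mul, BDS_absθ hα hirr, BDS_absθ hα hirr]
      have b2 : |(-1 : ℝ) ^ (n + 1) * (e (n + 2) * θ α (n + 1) - e (n + 1) * θ α (n + 2))|
          ≤ |e (n + 2)| * BDS_β α (n + 1) + |e (n + 1)| * BDS_β α (n + 2) := by
        rw [abs_mul, abs_pow, abs_neg, abs_one, one_pow, one_mul]
        calc |e (n + 2) * θ α (n + 1) - e (n + 1) * θ α (n + 2)|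
            ≤ |e (n + 2) * θ α (n + 1)| + |e (n + 1) * θ α (n + 2)| := abs_sub _ _
          _ = |e (n + 2)| * BDS_β α (n + 1) + |e (n + 1)| * BDS_β α (n + 2) := by
              rw [abs_mul, abs_mul, BDS_absθ hα hirr, BDS_absθ hα hirr]
      have hsmall_n := he_small n hn
      have hsmall_n1 := he_small (n + 1) (by omega)
      have hsmall_n2 := he_small (n + 2) (by omega)
      have htri := abs_sub ((-1 : ℝ) ^ n * (e (n + 1) * θ α n - e n * θ α (n + 1)))
        ((-1 : ℝ) ^ (n + 1) * (e (n + 2) * θ α (n + 1) - e (n + 1) * θ α (n + 2)))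
      have hnn1 : 0 ≤ |e n| := abs_nonneg _
      have hnn2 : 0 ≤ |e (n + 1)| := abs_nonneg _
      have hnn3 : 0 ≤ |e (n + 2)| := abs_nonneg _
      nlinarith
    have hKbound : |K| < (q α (n + 1) : ℤ) := by
      have hb1 := hkb n hn
      have hb2 := hkb (n + 1) (by omega)
      have hreal : |(K : ℝ)| < (q α (n + 1) : ℝ) := by
        rw [hK_def]
        push_cast
        calc |(k (n + 1) : ℝ) - (k n : ℝ)| ≤ |(k (n + 1) : ℝ)| + |(k n : ℝ)| := abs_sub _ _
          _ < (3 / 16) * (q α (n + 1) : ℝ) + (3 / 16) * (q α n : ℝ) := by linarith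
          _ ≤ (q α (n + 1) : ℝ) := by
              have := hq_le n
              have := hq_one (n + 1)
              linarith
      exact_mod_cast hreal
    have hK0 : K = 0 := by
      by_contra hK0
      have hbest := BDS_best hα hirr n K (-L) hK0 hKbound
      rw [Int.cast_neg, sub_neg_eq_add] at hbest
      linarith
    have hL0 : L = 0 := by
      have : |(L : ℝ)| < 1 := by
        have hβlt := BDS_β_lt_one hα hirr n
        rw [hK0] at habs1
        simp only [Int.cast_zero, zero_mul, zero_add] at habs1
        linarith
      have h5 : |L| < 1 := by exact_mod_cast this
      have := abs_lt.mp h5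
      omega
    constructor
    · have : k (n + 1) - k n = 0 := hK0
      omega
    · have : l (n + 1) - l n = 0 := hL0
      omega
  have hconst : ∀ n, N ≤ n → k n = k N ∧ l n = l N := by
    intro n hn
    induction n, hn using Nat.le_induction with
    | base => exact ⟨rfl, rfl⟩
    | succ n hn ih =>
      obtain ⟨h1, h2⟩ := hstep n hn
      exact ⟨h1.trans ih.1, h2.trans ih.2⟩
  refine ⟨k N, l N, ?_⟩
  by_contra hne
  have hd : 0 < |y - ((k N : ℝ) * α + l N)| :=
    abs_pos.mpr (sub_ne_zero.mpr fun h => hne (by linarith [h]))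
  obtain ⟨M, hM⟩ := BDS_eps_beta hα hirr hd
  set n := max N M with hn_def
  have hnN : N ≤ n := le_max_left _ _
  have hnM : M ≤ n := le_max_right _ _
  have h1 := hEQ n
  rw [(hconst n hnN).1, (hconst n hnN).2] at h1
  have h2 : |y - ((k N : ℝ) * α + l N)| =
      |e (n + 1) * θ α n - e n * θ α (n + 1)| := by
    rw [show y - ((k N : ℝ) * α + l N) =
      (-1 : ℝ) ^ n * (e (n + 1) * θ α n - e n * θ α (n + 1)) by linarith [h1]]
    rw [abs_mul, abs_pow, abs_neg, abs_one, one_pow, one_mul]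
  have h3 : |e (n + 1) * θ α n - e n * θ α (n + 1)| ≤ BDS_β α n := by
    have hβd1 : BDS_β α (n + 1) ≤ BDS_β α n := (BDS_β_succ_lt hα hirr n).le
    have hβn1 := BDS_β_pos hα hirr (n + 1)
    have hβn := BDS_β_pos hα hirr n
    calc |e (n + 1) * θ α n - e n * θ α (n + 1)|
        ≤ |e (n + 1) * θ α n| + |e n * θ α (n + 1)| := abs_sub _ _
      _ = |e (n + 1)| * BDS_β α n + |e n| * BDS_β α (n + 1) := by
          rw [abs_mul, abs_mul, BDS_absθ hα hirr, BDS_absθ hα hirr]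
      _ ≤ (1 / 2) * BDS_β α n + (1 / 2) * BDS_β α (n + 1) := by
          have := he_half (n + 1)
          have := he_half n
          nlinarith [abs_nonneg (e n), abs_nonneg (e (n + 1))]
      _ ≤ BDS_β α n := by linarith
  have h4 := hM n hnM
  linarith [h2 ▸ h3]

end Main

/-- **Theorem 3.1 (Bíró–Deshouillers–Sós).** `t_(xₙ)(𝕋) = ⟨α⟩` is countably infinite. -/
theorem stmt_18 (α : ℝ) (hα : α ∈ Set.Ioo (0 : ℝ) 1) (hirr : Irrational α)
    (x : ℕ → ℕ) (hmono : StrictMono x)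
    (hrange : Set.range x =
      {m : ℕ | ∃ n r : ℕ, 1 ≤ r ∧ r ≤ a α (n + 1) ∧ m = r * q α n}) :
    charSet (fun n => (x n : ℤ)) =
        (AddSubgroup.zmultiples ((α : Circle1)) : Set Circle1) ∧
      (charSet (fun n => (x n : ℤ))).Countable ∧
      (charSet (fun n => (x n : ℤ))).Infinite := by
  have hmain : charSet (fun n => (x n : ℤ)) =
      (AddSubgroup.zmultiples ((α : Circle1)) : Set Circle1) := by
    ext ξ
    constructor
    · refine QuotientAddGroup.induction_on ξ ?_
      intro y hy
      obtain ⟨K, L, hKL⟩ := BDS_hard hα hirr hmono hrange y hy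
      refine AddSubgroup.mem_zmultiples_iff.mpr ⟨K, ?_⟩
      rw [BDS_zsmul_coe, hKL, ← BDS_coe_add_int ((K : ℝ) * α) L]
    · intro hξ
      obtain ⟨K, hK⟩ := AddSubgroup.mem_zmultiples_iff.mp hξ
      rw [← hK]
      exact BDS_easy hα hirr hmono hrange K
  have hrangeSet : (AddSubgroup.zmultiples ((α : Circle1)) : Set Circle1) =
      Set.range (fun K : ℤ => K • ((α : ℝ) : Circle1)) := by
    ext ξ
    simp only [SetLike.mem_coe, AddSubgroup.mem_zmultiples_iff, Set.mem_range]
  refine ⟨hmain, ?_, ?_⟩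
  · rw [hmain, hrangeSet]
    exact Set.countable_range _
  · rw [hmain]
    apply Set.infinite_of_injective_forall_mem
      (f := fun K : ℤ => K • ((α : ℝ) : Circle1))
    · intro K K' h
      by_contra hne
      have hd : (K : ℤ) - K' ≠ 0 := sub_ne_zero.mpr hne
      simp only at h
      rw [BDS_zsmul_coe, BDS_zsmul_coe] at h
      have h0 : ((((K : ℝ) - K') * α : ℝ) : Circle1) = 0 := by
        have : (((K : ℝ) - K') * α : ℝ) = (K : ℝ) * α - (K' : ℝ) * α := by ring
        rw [this]
        rw [show ((((K : ℝ) * α - (K' : ℝ) * α : ℝ)) : Circle1) =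
          (((K : ℝ) * α : ℝ) : Circle1) - (((K' : ℝ) * α : ℝ) : Circle1) by
            rw [← AddCircle.coe_sub]]
        rw [h, sub_self]
      obtain ⟨n, hn⟩ := (AddCircle.coe_eq_zero_iff (1 : ℝ)).mp h0
      rw [zsmul_eq_mul, mul_one] at hn
      have hKK : ((K - K' : ℤ) : ℝ) ≠ 0 := by exact_mod_cast hd
      have hαval : α = (n : ℝ) / ((K - K' : ℤ) : ℝ) := by
        rw [eq_div_iff hKK]
        push_cast
        push_cast at hn
        linarith
      exact hirr ⟨(n : ℚ) / ((K - K' : ℤ) : ℚ), by push_cast; rw [hαval]; push_cast; ring⟩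
    · intro K
      exact AddSubgroup.mem_zmultiples_iff.mpr ⟨K, rfl⟩
end
end

section
/- Let α = [0; a₁, a₂, …] ∈ (0,1) be irrational with (aₙ) bounded, and let (qₙ) be the denominators of the convergents of α. Then t_{(qₙ)}(𝕋) = ⟨α⟩; that is, for β ∈ ℝ, ‖qₙβ‖ → 0 if and only if β ∈ ⟨α⟩ + ℤ. -/
open Filter Topology

noncomputable section

open CF

namespace CFAux

variable {α : ℝ}

lemma G_prop (hα : α ∈ Set.Ioo (0:ℝ) 1) (hirr : Irrational α) (n : ℕ) :
    G α n ∈ Set.Ioo (0:ℝ) 1 ∧ Irrational (G α n) := by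
  induction n with
  | zero => exact ⟨hα, hirr⟩
  | succ n ih =>
    obtain ⟨⟨h0, h1⟩, hi⟩ := ih
    have hinv : Irrational (G α n)⁻¹ := hi.inv
    have hfr : Irrational (Int.fract (G α n)⁻¹) := by
      rw [Int.fract]
      exact hinv.sub_intCast _
    refine ⟨⟨?_, ?_⟩, hfr⟩
    · rcases lt_or_eq_of_le (Int.fract_nonneg (G α n)⁻¹) with h | h
      · exact h
      · exact absurd h.symm (by simpa using hfr.ne_int 0)
    · exact Int.fract_lt_one _

lemma G_pos (hα : α ∈ Set.Ioo (0:ℝ) 1) (hirr : Irrational α) (n : ℕ) : 0 < G α n :=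
  (G_prop hα hirr n).1.1

lemma G_lt_one (hα : α ∈ Set.Ioo (0:ℝ) 1) (hirr : Irrational α) (n : ℕ) : G α n < 1 :=
  (G_prop hα hirr n).1.2

lemma inv_eq (hα : α ∈ Set.Ioo (0:ℝ) 1) (hirr : Irrational α) (n : ℕ) :
    (G α n)⁻¹ = (a α (n+1) : ℝ) + G α (n+1) := by
  have h0 := G_pos hα hirr n
  have ha : (a α (n+1) : ℝ) = ((⌊(G α n)⁻¹⌋ : ℤ) : ℝ) := by
    show ((⌊(G α n)⁻¹⌋₊ : ℕ) : ℝ) = _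
    exact_mod_cast natCast_floor_eq_intCast_floor (R := ℝ) (by positivity)
  rw [ha]
  show (G α n)⁻¹ = _ + Int.fract (G α n)⁻¹
  rw [Int.fract]; ring

lemma a_pos (hα : α ∈ Set.Ioo (0:ℝ) 1) (hirr : Irrational α) (n : ℕ) :
    1 ≤ a α (n+1) := by
  have h0 := G_pos hα hirr n
  have h1 := G_lt_one hα hirr n
  have hgt : (1:ℝ) < (G α n)⁻¹ := by
    rw [lt_inv_comm₀ (by norm_num) h0]
    simpa using h1
  show 1 ≤ ⌊(G α n)⁻¹⌋₊
  exact Nat.le_floor (by exact_mod_cast hgt.le)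

lemma q_lower (hα : α ∈ Set.Ioo (0:ℝ) 1) (hirr : Irrational α) :
    ∀ n, 1 ≤ q α n ∧ n ≤ q α n := by
  intro n
  induction n using Nat.strong_induction_on with
  | _ n ih =>
    match n with
    | 0 => simp [q]
    | 1 => simpa [q] using a_pos hα hirr 0
    | (m+2) =>
      have h1 := ih (m+1) (by omega)
      have h0 := ih m (by omega)
      have ha := a_pos hα hirr (m+1)
      have hq : q α (m+2) = a α (m+2) * q α (m+1) + q α m := rfl
      constructor
      · rw [hq]; nlinarith [h1.1, h0.1]
      · rw [hq]; nlinarith [h1.2, h0.1, h1.1]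

lemma theta_rec (n : ℕ) :
    θ α (n+2) = (a α (n+2) : ℝ) * θ α (n+1) + θ α n := by
  have hq : q α (n+2) = a α (n+2) * q α (n+1) + q α n := rfl
  have hp : p α (n+2) = a α (n+2) * p α (n+1) + p α n := rfl
  simp only [θ, hq, hp]
  push_cast
  ring

lemma theta_zero : θ α 0 = α := by simp [θ, q, p]

lemma theta_succ (hα : α ∈ Set.Ioo (0:ℝ) 1) (hirr : Irrational α) :
    ∀ n, θ α (n+1) = -(G α (n+1)) * θ α n := by
  intro n
  induction n with
  | zero =>
    have hα0 : α ≠ 0 := ne_of_gt hα.1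
    have hθ1 : θ α 1 = (a α 1 : ℝ) * α - 1 := by simp [θ, q, p]
    have h' : α⁻¹ = (a α (0+1) : ℝ) + G α (0+1) := inv_eq hα hirr 0
    rw [hθ1, theta_zero]
    have ha1 : (a α 1 : ℝ) = α⁻¹ - G α 1 := by rw [h']; ring
    rw [ha1]
    field_simp
    ring
  | succ n ih =>
    have h := inv_eq hα hirr (n+1)
    have hGne : G α (n+1) ≠ 0 := ne_of_gt (G_pos hα hirr (n+1))
    have hrec := theta_rec (α := α) n
    have ha : (a α (n+2) : ℝ) = (G α (n+1))⁻¹ - G α (n+2) := by rw [h]; ring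
    rw [hrec, ha, ih]
    field_simp
    ring

lemma abs_theta_two_step (hα : α ∈ Set.Ioo (0:ℝ) 1) (hirr : Irrational α) (n : ℕ) :
    |θ α (n+2)| ≤ |θ α n| / 2 := by
  have h1 := theta_succ hα hirr n
  have h2 := theta_succ hα hirr (n+1)
  have g1pos := G_pos hα hirr (n+1)
  have g2pos := G_pos hα hirr (n+2)
  have g2lt := G_lt_one hα hirr (n+2)
  have hkey : G α (n+1) * (1 + G α (n+2)) ≤ 1 := by
    have h := inv_eq hα hirr (n+1)
    have ha : (1 : ℝ) ≤ (a α (n+2) : ℝ) := by exact_mod_cast a_pos hα hirr (n+1)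
    have hle : (1 : ℝ) + G α (n+2) ≤ (G α (n+1))⁻¹ := by rw [h]; linarith
    calc G α (n+1) * (1 + G α (n+2)) ≤ G α (n+1) * (G α (n+1))⁻¹ :=
          mul_le_mul_of_nonneg_left hle (le_of_lt g1pos)
      _ = 1 := mul_inv_cancel₀ (ne_of_gt g1pos)
  have hprod : G α (n+1) * G α (n+2) ≤ 1/2 := by nlinarith
  rw [h2, h1]
  rw [show -G α (n+2) * (-G α (n+1) * θ α n) = (G α (n+1) * G α (n+2)) * θ α n by ring,
    abs_mul]
  rw [abs_of_nonneg (by positivity : (0:ℝ) ≤ G α (n+1) * G α (n+2))]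
  nlinarith [abs_nonneg (θ α n)]

lemma abs_theta_lt_one (hα : α ∈ Set.Ioo (0:ℝ) 1) (hirr : Irrational α) (n : ℕ) :
    |θ α n| < 1 := by
  induction n with
  | zero => rw [theta_zero, abs_of_pos hα.1]; exact hα.2
  | succ n ih =>
    rw [theta_succ hα hirr n]
    rw [show -G α (n+1) * θ α n = -(G α (n+1) * θ α n) by ring, abs_neg, abs_mul,
      abs_of_pos (G_pos hα hirr (n+1))]
    nlinarith [G_lt_one hα hirr (n+1), G_pos hα hirr (n+1), abs_nonneg (θ α n)]

lemma abs_theta_bound (hα : α ∈ Set.Ioo (0:ℝ) 1) (hirr : Irrational α) :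
    ∀ n, |θ α n| ≤ (1/2 : ℝ)^(n/2) := by
  intro n
  induction n using Nat.strong_induction_on with
  | _ n ih =>
    match n with
    | 0 => simpa using le_of_lt (abs_theta_lt_one hα hirr 0)
    | 1 => simpa using le_of_lt (abs_theta_lt_one hα hirr 1)
    | (m+2) =>
      have h := ih m (by omega)
      have h2 := abs_theta_two_step hα hirr m
      have hd : (m+2)/2 = m/2 + 1 := by omega
      rw [hd, pow_succ]
      nlinarith [pow_nonneg (by norm_num : (0:ℝ) ≤ 1/2) (m/2)]

lemma theta_tendsto (hα : α ∈ Set.Ioo (0:ℝ) 1) (hirr : Irrational α) :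
    Tendsto (θ α) atTop (𝓝 0) := by
  rw [tendsto_zero_iff_abs_tendsto_zero]
  have hhalf : Tendsto (fun n : ℕ => n / 2) atTop atTop :=
    tendsto_atTop_atTop.mpr fun b => ⟨2*b, fun n hn => by omega⟩
  have h2 : Tendsto (fun n : ℕ => ((1:ℝ)/2)^(n/2)) atTop (𝓝 0) :=
    (tendsto_pow_atTop_nhds_zero_of_lt_one (by norm_num) (by norm_num)).comp hhalf
  exact squeeze_zero (fun n => abs_nonneg _) (abs_theta_bound hα hirr) h2

lemma det_eq (n : ℕ) :
    (p α n : ℤ) * (q α (n+1) : ℤ) - (p α (n+1) : ℤ) * (q α n : ℤ) = (-1)^(n+1) := by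
  induction n with
  | zero => simp [p, q]
  | succ n ih =>
    have hq : q α (n+2) = a α (n+2) * q α (n+1) + q α n := rfl
    have hp : p α (n+2) = a α (n+2) * p α (n+1) + p α n := rfl
    rw [hq, hp]
    push_cast
    rw [pow_succ]
    linear_combination (-1 : ℤ) * ih

lemma p_eq (n : ℕ) : (p α n : ℝ) = (q α n : ℝ) * α - θ α n := by
  simp [θ]

end CFAux

open CFAux

lemma coe_int_eq_zero (m : ℤ) : ((m : ℝ) : Circle1) = 0 := by
  rw [AddCircle.coe_eq_zero_iff]
  exact ⟨m, by simp⟩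

lemma zsmul_coe (m : ℤ) (x : ℝ) : m • ((x : ℝ) : Circle1) = ((m * x : ℝ) : Circle1) := by
  rw [← AddCircle.coe_zsmul, zsmul_eq_mul]

/-- **Larcher's theorem.** For bounded partial quotients, `t_(qₙ)(𝕋) = ⟨α⟩`; that is,
`‖qₙβ‖ → 0` iff `β ∈ ⟨α⟩ + ℤ`. -/
theorem stmt_19 (α : ℝ) (hα : α ∈ Set.Ioo (0 : ℝ) 1) (hirr : Irrational α)
    (M : ℕ) (hbd : ∀ n, 1 ≤ n → a α n ≤ M) :
    charSet (fun n => (q α n : ℤ)) =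
        (AddSubgroup.zmultiples ((α : Circle1)) : Set Circle1) ∧
      ∀ β : ℝ, Tendsto (fun n => (q α n : ℤ) • (↑β : Circle1)) atTop (𝓝 0) ↔
        ∃ k l : ℤ, β = (k : ℝ) * α + (l : ℝ) := by
  have key : ∀ β : ℝ, Tendsto (fun n => (q α n : ℤ) • (↑β : Circle1)) atTop (𝓝 0) ↔
      ∃ k l : ℤ, β = (k : ℝ) * α + (l : ℝ) := by
    intro β
    constructor
    · intro h
      have hcoe : ∀ n : ℕ, (q α n : ℤ) • ((β : ℝ) : Circle1)
          = (((q α n : ℝ) * β : ℝ) : Circle1) := by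
        intro n; rw [zsmul_coe]; norm_num
      rw [show (fun n => (q α n : ℤ) • ((β:ℝ) : Circle1))
          = fun n => (((q α n : ℝ) * β : ℝ) : Circle1) from funext hcoe] at h
      have hnorm : Tendsto (fun n => ‖(((q α n : ℝ) * β : ℝ) : Circle1)‖) atTop (𝓝 0) :=
        tendsto_zero_iff_norm_tendsto_zero.mp h
      set ε : ℕ → ℝ := fun n => (q α n : ℝ) * β - round ((q α n : ℝ) * β) with hε_def
      set r : ℕ → ℤ := fun n => round ((q α n : ℝ) * β) with hr_def
      have hεnorm : ∀ n, ‖(((q α n : ℝ) * β : ℝ) : Circle1)‖ = |ε n| := by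
        intro n
        rw [AddCircle.norm_eq]
        simp [hε_def]
      have hε : Tendsto (fun n => |ε n|) atTop (𝓝 0) := by
        rwa [show (fun n => ‖(((q α n : ℝ) * β : ℝ) : Circle1)‖)
            = fun n => |ε n| from funext hεnorm] at hnorm
      have hM2 : (0:ℝ) < 1/(M+2) := by positivity
      obtain ⟨N, hN⟩ : ∃ N, ∀ n ≥ N, |ε n| < 1/(M+2) := by
        have h' := (Metric.tendsto_atTop.mp hε) (1/(M+2)) hM2
        obtain ⟨N, hN⟩ := h'
        refine ⟨N, fun n hn => ?_⟩
        have := hN n hn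
        rwa [Real.dist_eq, sub_zero, abs_abs] at this
      have hqβ : ∀ n, (q α n : ℝ) * β = r n + ε n := by
        intro n; simp [hr_def, hε_def]
      have hrrec : ∀ n, N ≤ n → r (n+2) = (a α (n+2) : ℤ) * r (n+1) + r n := by
        intro n hn
        have hqrec : ((q α (n+2) : ℝ)) = (a α (n+2) : ℝ) * (q α (n+1) : ℝ) + (q α n : ℝ) := by
          have hh : q α (n+2) = a α (n+2) * q α (n+1) + q α n := rfl
          rw [hh]; push_cast; ring
        have e2 := hqβ (n+2); have e1 := hqβ (n+1); have e0 := hqβ n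
        have hd : ((r (n+2) - (a α (n+2) : ℤ) * r (n+1) - r n : ℤ) : ℝ)
            = - ε (n+2) + (a α (n+2) : ℝ) * ε (n+1) + ε n := by
          push_cast
          linear_combination (-1 : ℝ) * e2 + (a α (n+2) : ℝ) * e1 + e0 + β * hqrec
        have haM : (a α (n+2) : ℝ) ≤ (M : ℝ) := by exact_mod_cast hbd (n+2) (by omega)
        have ha0 : (0:ℝ) ≤ (a α (n+2) : ℝ) := by positivity
        have hb2 := hN (n+2) (by omega)
        have hb1 := hN (n+1) (by omega)
        have hb0 := hN n hn
        have habs : |((r (n+2) - (a α (n+2) : ℤ) * r (n+1) - r n : ℤ) : ℝ)| < 1 := by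
          rw [hd]
          have t1 : |(- ε (n+2) + (a α (n+2) : ℝ) * ε (n+1) + ε n)|
              ≤ |ε (n+2)| + (a α (n+2) : ℝ) * |ε (n+1)| + |ε n| := by
            calc |(- ε (n+2) + (a α (n+2) : ℝ) * ε (n+1) + ε n)|
                ≤ |(- ε (n+2) + (a α (n+2) : ℝ) * ε (n+1))| + |ε n| := abs_add_le _ _
              _ ≤ |ε (n+2)| + |(a α (n+2) : ℝ) * ε (n+1)| + |ε n| := by
                  have := abs_add_le (- ε (n+2)) ((a α (n+2) : ℝ) * ε (n+1))
                  rw [abs_neg] at this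
                  linarith
              _ = |ε (n+2)| + (a α (n+2) : ℝ) * |ε (n+1)| + |ε n| := by
                  rw [abs_mul, abs_of_nonneg ha0]
          have hMbound : ((M:ℝ) + 2) * (1/((M:ℝ)+2)) = 1 := by
            field_simp
          nlinarith [abs_nonneg (ε (n+1)), mul_le_mul_of_nonneg_right haM (abs_nonneg (ε (n+1)))]
        have hint : |r (n+2) - (a α (n+2) : ℤ) * r (n+1) - r n| < 1 := by
          exact_mod_cast (by rwa [← Int.cast_abs] at habs :
            ((|r (n+2) - (a α (n+2) : ℤ) * r (n+1) - r n| : ℤ) : ℝ) < 1)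
        have := Int.abs_lt_one_iff.mp hint
        omega
      set s : ℤ := (-1)^(N+1) with hs_def
      have hdet : (p α N : ℤ) * (q α (N+1) : ℤ) - (p α (N+1) : ℤ) * (q α N : ℤ) = s :=
        det_eq N
      have hss : s * s = 1 := by
        rw [hs_def, ← pow_add, show (N+1)+(N+1) = 2*(N+1) by ring, pow_mul]
        norm_num
      set k : ℤ := -s * ((r N) * (p α (N+1) : ℤ) - (r (N+1)) * (p α N : ℤ)) with hk_def
      set l : ℤ := -s * ((q α N : ℤ) * (r (N+1)) - (q α (N+1) : ℤ) * (r N)) with hl_def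
      have hbase0 : r N = k * (q α N : ℤ) + l * (p α N : ℤ) := by
        rw [hk_def, hl_def]
        linear_combination (-s * r N) * hdet + (- r N) * hss
      have hbase1 : r (N+1) = k * (q α (N+1) : ℤ) + l * (p α (N+1) : ℤ) := by
        rw [hk_def, hl_def]
        linear_combination (-s * r (N+1)) * hdet + (- r (N+1)) * hss
      have hall : ∀ m, r (N+m) = k * (q α (N+m) : ℤ) + l * (p α (N+m) : ℤ) := by
        intro m
        induction m using Nat.strong_induction_on with
        | _ m ih =>
          match m with
          | 0 => exact hbase0
          | 1 => exact hbase1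
          | (m+2) =>
            have h1 := ih (m+1) (by omega)
            have h0 := ih m (by omega)
            have hr2 : r (N+m+2) = (a α (N+m+2) : ℤ) * r (N+m+1) + r (N+m) :=
              hrrec (N+m) (by omega)
            have hq : q α (N+m+2) = a α (N+m+2) * q α (N+m+1) + q α (N+m) := rfl
            have hp : p α (N+m+2) = a α (N+m+2) * p α (N+m+1) + p α (N+m) := rfl
            show r (N+m+2) = k * (q α (N+m+2) : ℤ) + l * (p α (N+m+2) : ℤ)
            rw [hr2, hq, hp]
            push_cast
            have h1' : r (N+m+1) = k * (q α (N+m+1) : ℤ) + l * (p α (N+m+1) : ℤ) := h1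
            have h0' : r (N+m) = k * (q α (N+m) : ℤ) + l * (p α (N+m) : ℤ) := h0
            linear_combination (a α (N+m+2) : ℤ) * h1' + h0'
      have hfinal : ∀ n, N ≤ n →
          (q α n : ℝ) * (β - (l:ℝ)*α - (k:ℝ)) = ε n - (l:ℝ) * θ α n := by
        intro n hn
        obtain ⟨m, rfl⟩ := Nat.exists_eq_add_of_le hn
        have hr := hall m
        have hrR : ((r (N+m) : ℤ) : ℝ)
            = (k:ℝ) * (q α (N+m) : ℝ) + (l:ℝ) * (p α (N+m) : ℝ) := by
          exact_mod_cast hr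
        have hpe := p_eq (α := α) (N+m)
        have he := hqβ (N+m)
        linear_combination he + (l:ℝ) * hpe + hrR
      have hεt : Tendsto ε atTop (𝓝 0) :=
        (tendsto_zero_iff_abs_tendsto_zero _).mpr hε
      have htc : Tendsto (fun n => (q α n : ℝ) * (β - (l:ℝ)*α - (k:ℝ))) atTop (𝓝 0) := by
        have h1 : Tendsto (fun n => ε n - (l:ℝ) * θ α n) atTop (𝓝 0) := by
          have := hεt.sub ((theta_tendsto hα hirr).const_mul (l:ℝ))
          simpa using this
        exact h1.congr' (eventually_atTop.mpr ⟨N, fun n hn => (hfinal n hn).symm⟩)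
      have hc0 : β - (l:ℝ)*α - (k:ℝ) = 0 := by
        by_contra hc0
        have habs : Tendsto (fun n => |(q α n : ℝ) * (β - (l:ℝ)*α - (k:ℝ))|) atTop (𝓝 0) :=
          (tendsto_zero_iff_abs_tendsto_zero _).mp htc
        obtain ⟨n, hn⟩ := (habs.eventually (gt_mem_nhds (abs_pos.mpr hc0))).exists
        have hq1 : (1:ℝ) ≤ (q α n : ℝ) := by exact_mod_cast (q_lower hα hirr n).1
        rw [abs_mul, abs_of_nonneg (by positivity : (0:ℝ) ≤ (q α n : ℝ))] at hn
        nlinarith [abs_pos.mpr hc0]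
      exact ⟨l, k, by linarith⟩
    · rintro ⟨k, l, rfl⟩
      have hθ := theta_tendsto hα hirr
      have h1 : Tendsto (fun n => (k:ℝ) * θ α n) atTop (𝓝 0) := by
        simpa using hθ.const_mul (k:ℝ)
      have h2 : Tendsto (fun n => (((k:ℝ) * θ α n : ℝ) : Circle1)) atTop (𝓝 0) := by
        have hc : Continuous ((↑) : ℝ → Circle1) := AddCircle.continuous_mk' 1
        exact (hc.tendsto 0).comp h1
      refine h2.congr ?_
      intro n
      have hsplit : (q α n : ℝ) * ((k:ℝ) * α + (l:ℝ))
          = (k:ℝ) * θ α n + ((k * (p α n : ℤ) + l * (q α n : ℤ) : ℤ) : ℝ) := by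
        have hpe := p_eq (α := α) n
        push_cast
        linear_combination (-(k:ℝ)) * hpe
      calc (((k:ℝ) * θ α n : ℝ) : Circle1)
          = (((q α n : ℝ) * ((k:ℝ) * α + (l:ℝ)) : ℝ) : Circle1) := by
            rw [hsplit, AddCircle.coe_add, coe_int_eq_zero, add_zero]
        _ = (q α n : ℤ) • ((((k:ℝ) * α + (l:ℝ)) : ℝ) : Circle1) := by
            rw [zsmul_coe]; norm_num
  refine ⟨?_, key⟩
  ext x
  obtain ⟨β, rfl⟩ := QuotientAddGroup.mk_surjective x
  rw [charSet, Set.mem_setOf_eq, key β]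
  simp only [SetLike.mem_coe, AddSubgroup.mem_zmultiples_iff]
  constructor
  · rintro ⟨k, l, rfl⟩
    refine ⟨k, ?_⟩
    rw [zsmul_coe]
    rw [show (((k:ℝ) * α : ℝ) : Circle1)
        = ((((k:ℝ) * α + (l:ℝ)) : ℝ) : Circle1) - (((l:ℝ) : ℝ) : Circle1) by
      rw [← AddCircle.coe_sub]; norm_num]
    rw [coe_int_eq_zero, sub_zero]
  · rintro ⟨k, hk⟩
    rw [zsmul_coe] at hk
    have hsub : ((β - (k:ℝ)*α : ℝ) : Circle1) = 0 := by
      rw [AddCircle.coe_sub, hk, sub_self]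
    obtain ⟨m, hm⟩ := (AddCircle.coe_eq_zero_iff (1:ℝ)).mp hsub
    refine ⟨k, m, ?_⟩
    have : (m:ℝ) = β - (k:ℝ)*α := by simpa using hm
    linarith
end
end
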